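/- arXiv:2004.10713 — 2 statements merged into one kernel-verified Lean document; each statement's English description precedes it below -/
import Mathlib

section
/- Assume hypothesis H4: fᵢ(S, I) = S·gᵢ(S, I) with gᵢ C¹ on the first quadrant (i = 1, 2). Let (S*, V₁*, I₁*, I₂*) be an endemic equilibrium of system (3) (all components positive, satisfying Λ − F₁(S*, I₁*) − F₂(S*, I₂*) − λS* = 0, rS* − (μ + kI₂*)V₁* = 0, F₁(S*, I₁*) − α₁I₁* = 0, F₂(S*, I₂*) + kI₂*V₁* − α₂I₂* = 0), and assume that for every (S, V₁, I₁, I₂) with all components positive and (S, V₁, I₁, I₂) ≠ (S*, V₁*, I₁*, I₂*): F₁(S*, I₁*)·(2 − S*/S − S·g₁(S, I₁)/(S*·g₁(S*, I₁*))) + F₂(S*, I₂*)·(2 − S*/S − S·g₂(S, I₂)/(S*·g₂(S*, I₂*))) + rS*·(3 − S*/S − V₁/V₁* − S·V₁*/(S*·V₁)) + μS*·(2 − S*/S − S/S*) + I₁·(S*·g₁(S, I₁) − α₁) + I₂·(S*·g₂(S, I₂) + kV₁* − α₂) < 0. Then every solution of system (3) with all initial components positive satisfies (S(t), V₁(t),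 I₁(t), I₂(t)) → (S*, V₁*, I₁*, I₂*) as t → ∞; that is, E₃ is globally asymptotically stable. -/
open Set Filter Real

/-- Φ expression from the statement, as a function of the four state coordinates. -/
noncomputable def PhiAux (F₁ F₂ g₁ g₂ : ℝ → ℝ → ℝ) (r μ k α₁ α₂ Ss Vs Is1 Is2 : ℝ)
    (Sx Vx Ix1 Ix2 : ℝ) : ℝ :=
  F₁ Ss Is1 * (2 - Ss / Sx - Sx * g₁ Sx Ix1 / (Ss * g₁ Ss Is1)) +
  F₂ Ss Is2 * (2 - Ss / Sx - Sx * g₂ Sx Ix2 / (Ss * g₂ Ss Is2)) +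
  r * Ss * (3 - Ss / Sx - Vx / Vs - Sx * Vs / (Ss * Vx)) +
  μ * Ss * (2 - Ss / Sx - Sx / Ss) +
  Ix1 * (Ss * g₁ Sx Ix1 - α₁) + Ix2 * (Ss * g₂ Sx Ix2 + k * Vs - α₂)

/-- The Lyapunov function along the solution. -/
noncomputable def HAux (Ss Vs Is1 Is2 : ℝ) (S V I1 I2 : ℝ → ℝ) (t : ℝ) : ℝ :=
  (S t - Ss * Real.log (S t)) + (V t - Vs * Real.log (V t)) +
  (I1 t - Is1 * Real.log (I1 t)) + (I2 t - Is2 * Real.log (I2 t))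

private lemma aux_log_lower {c u : ℝ} (hc : 0 < c) (hu : 0 < u) :
    c - c * Real.log c ≤ u - c * Real.log u := by
  have h := Real.log_le_sub_one_of_pos (show (0:ℝ) < u / c by positivity)
  rw [Real.log_div hu.ne' hc.ne'] at h
  have h2 : c * (Real.log u - Real.log c) ≤ c * (u / c - 1) :=
    mul_le_mul_of_nonneg_left h hc.le
  have h3 : c * (u / c - 1) = u - c := by field_simp
  nlinarith

private lemma aux_log_lb {c u A : ℝ} (hc : 0 < c) (hu : 0 < u)
    (h : u - c * Real.log u ≤ A) : Real.exp (-(A / c)) ≤ u := by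
  have h1 : -(A / c) ≤ Real.log u := by
    have h2 : -A ≤ c * Real.log u := by linarith
    have h3 : (-A) / c ≤ Real.log u := (div_le_iff₀ hc).2 (by linarith)
    simpa [neg_div] using h3
  calc Real.exp (-(A/c)) ≤ Real.exp (Real.log u) := Real.exp_le_exp.2 h1
    _ = u := Real.exp_log hu

private lemma aux_log_ub {c u A : ℝ} (hc : 0 < c) (hu : 0 < u)
    (h : u - c * Real.log u ≤ A) : u ≤ 2 * A + 2 * c * Real.log (2 * c) := by
  have h2c : (0:ℝ) < 2 * c := by positivity
  have h1 := Real.log_le_sub_one_of_pos (show (0:ℝ) < u / (2*c) by positivity)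
  rw [Real.log_div hu.ne' h2c.ne'] at h1
  -- log u ≤ log (2c) + u/(2c) - 1
  have h2 : c * Real.log u ≤ c * (Real.log (2*c) + u/(2*c) - 1) :=
    mul_le_mul_of_nonneg_left (by linarith) hc.le
  have h3 : c * (u / (2*c)) = u / 2 := by field_simp
  nlinarith

private lemma aux_gronwall {u du : ℝ → ℝ} {T C : ℝ} (hT : 0 ≤ T)
    (hd : ∀ t ∈ Set.Icc (0:ℝ) T, HasDerivAt u (du t) t)
    (hge : ∀ t ∈ Set.Icc (0:ℝ) T, -C * u t ≤ du t) :
    u 0 * Real.exp (-C * T) ≤ u T := by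
  set φ : ℝ → ℝ := fun t => u t * Real.exp (C * t) with hφ
  have hdφ : ∀ t ∈ Set.Icc (0:ℝ) T, HasDerivAt φ ((du t + C * u t) * Real.exp (C * t)) t := by
    intro t ht
    have h1 : HasDerivAt (fun s => Real.exp (C * s)) (C * Real.exp (C * t)) t := by
      have := ((hasDerivAt_id t).const_mul C).exp
      simpa [mul_comm] using this
    have := (hd t ht).fun_mul h1
    exact this.congr_deriv (by ring)
  have hmono : MonotoneOn φ (Set.Icc 0 T) := by
    apply monotoneOn_of_deriv_nonneg (convex_Icc 0 T)
    · exact fun t ht => ((hdφ t ht).continuousAt).continuousWithinAt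
    · intro t ht
      rw [interior_Icc] at ht
      exact ((hdφ t (Set.mem_Icc_of_Ioo ht)).differentiableAt).differentiableWithinAt
    · intro t ht
      rw [interior_Icc] at ht
      rw [(hdφ t (Set.mem_Icc_of_Ioo ht)).deriv]
      have := hge t (Set.mem_Icc_of_Ioo ht)
      have : 0 ≤ du t + C * u t := by linarith
      positivity
  have h0T : φ 0 ≤ φ T := hmono (Set.left_mem_Icc.2 hT) (Set.right_mem_Icc.2 hT) hT
  have hφ0 : φ 0 = u 0 := by simp [hφ]
  have hφT : φ T = u T * Real.exp (C * T) := rfl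
  have hexp : (0:ℝ) < Real.exp (C * T) := Real.exp_pos _
  rw [hφ0, hφT] at h0T
  rw [show -C * T = -(C*T) by ring, Real.exp_neg]
  rw [mul_inv_le_iff₀ hexp]
  linarith

private lemma aux_decay {f df : ℝ → ℝ} {a b ε : ℝ} (hab : a ≤ b)
    (hd : ∀ t ∈ Set.Icc a b, HasDerivAt f (df t) t)
    (hle : ∀ t ∈ Set.Icc a b, df t ≤ -ε) :
    f b ≤ f a - ε * (b - a) := by
  set g : ℝ → ℝ := fun t => f t + ε * t with hg
  have hdg : ∀ t ∈ Set.Icc a b, HasDerivAt g (df t + ε) t := by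
    intro t ht
    have hε : HasDerivAt (fun s : ℝ => ε * s) ε t := by
      simpa using (hasDerivAt_id t).const_mul ε
    exact (hd t ht).add hε
  have hanti : AntitoneOn g (Set.Icc a b) := by
    apply antitoneOn_of_deriv_nonpos (convex_Icc a b)
    · exact fun t ht => ((hdg t ht).continuousAt).continuousWithinAt
    · intro t ht
      rw [interior_Icc] at ht
      exact ((hdg t (Set.mem_Icc_of_Ioo ht)).differentiableAt).differentiableWithinAt
    · intro t ht
      rw [interior_Icc] at ht
      rw [(hdg t (Set.mem_Icc_of_Ioo ht)).deriv]
      linarith [hle t (Set.mem_Icc_of_Ioo ht)]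
  have := hanti (Set.left_mem_Icc.2 hab) (Set.right_mem_Icc.2 hab) hab
  simp only [hg] at this
  linarith

private lemma aux_pos_of_deriv_pos {φ dφ : ℝ → ℝ} {c : ℝ} (hc : 0 < c) (h0 : φ 0 = 0)
    (hd : ∀ x ∈ Set.Icc (0:ℝ) c, HasDerivAt φ (dφ x) x)
    (hpos : ∀ x ∈ Set.Icc (0:ℝ) c, 0 < dφ x) : 0 < φ c := by
  have hmono : StrictMonoOn φ (Set.Icc 0 c) := by
    apply strictMonoOn_of_deriv_pos (convex_Icc 0 c)
    · exact fun t ht => ((hd t ht).continuousAt).continuousWithinAt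
    · intro t ht
      rw [interior_Icc] at ht
      rw [(hd t (Set.mem_Icc_of_Ioo ht)).deriv]
      exact hpos t (Set.mem_Icc_of_Ioo ht)
  have := hmono (Set.left_mem_Icc.2 hc.le) (Set.right_mem_Icc.2 hc.le) hc
  rw [h0] at this; exact this
set_option maxHeartbeats 2000000

private lemma key_alg (Ss Vs Is1 Is2 Sx Vx I1 I2 r μ k α₁ α₂ lam Λ G1 G2 ga gb F1s F2s : ℝ)
    (hSs : Ss ≠ 0) (hVs : Vs ≠ 0) (hSx : Sx ≠ 0) (hVx : Vx ≠ 0) (hI1 : I1 ≠ 0) (hI2 : I2 ≠ 0)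
    (hga0 : ga ≠ 0) (hgb0 : gb ≠ 0)
    (hga : Ss * ga = α₁) (hgb : Ss * gb + k * Vs = α₂)
    (hF1s : F1s = Is1 * (Ss * ga)) (hF2s : F2s = Is2 * (Ss * gb))
    (hlam : lam = r + μ)
    (hΛ : Λ = F1s + F2s + lam * Ss)
    (hμeq : μ = r * Ss / Vs - k * Is2) :
    (1 - Ss / Sx) * (Λ - I1 * (Sx * G1) - I2 * (Sx * G2) - lam * Sx)
      + (1 - Vs / Vx) * (r * Sx - (μ + k * I2) * Vx)
      + (1 - Is1 / I1) * (I1 * (Sx * G1) - α₁ * I1)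
      + (1 - Is2 / I2) * (I2 * (Sx * G2) + k * I2 * Vx - α₂ * I2)
    = F1s * (2 - Ss / Sx - Sx * G1 / (Ss * ga)) +
      F2s * (2 - Ss / Sx - Sx * G2 / (Ss * gb)) +
      r * Ss * (3 - Ss / Sx - Vx / Vs - Sx * Vs / (Ss * Vx)) +
      μ * Ss * (2 - Ss / Sx - Sx / Ss) +
      I1 * (Ss * G1 - α₁) + I2 * (Ss * G2 + k * Vs - α₂) := by
  subst hga hgb hF1s hF2s hlam hΛ hμeq
  field_simp
  ring


/-- Theorem 5.10: under H4 (fᵢ(S,I) = S·gᵢ(S,I)) and the Lyapunov sign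
condition, the endemic equilibrium E₃ = (S*, V₁*, I₁*, I₂*) is globally asymptotically
stable: every solution with positive initial values converges to E₃. -/
theorem E3_globally_asymptotically_stable
    (Λ r μ k α₁ α₂ lam : ℝ)
    (hΛ : 0 < Λ) (hr : 0 < r) (hμ : 0 < μ) (hk : 0 < k)
    (hα₁ : μ < α₁) (hα₂ : μ < α₂) (hlam : lam = r + μ)
    (F₁ F₂ f₁ f₂ F₁S F₁I F₂S F₂I f₁S f₁I f₂S f₂I : ℝ → ℝ → ℝ)
    (hF₁nn : ∀ S I : ℝ, 0 ≤ S → 0 ≤ I → 0 ≤ F₁ S I)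
    (hF₂nn : ∀ S I : ℝ, 0 ≤ S → 0 ≤ I → 0 ≤ F₂ S I)
    (hF₁C1 : ContDiffOn ℝ 1 (fun p : ℝ × ℝ => F₁ p.1 p.2) {p : ℝ × ℝ | 0 ≤ p.1 ∧ 0 ≤ p.2})
    (hF₂C1 : ContDiffOn ℝ 1 (fun p : ℝ × ℝ => F₂ p.1 p.2) {p : ℝ × ℝ | 0 ≤ p.1 ∧ 0 ≤ p.2})
    (hf₁C1 : ContDiffOn ℝ 1 (fun p : ℝ × ℝ => f₁ p.1 p.2) {p : ℝ × ℝ | 0 ≤ p.1 ∧ 0 ≤ p.2})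
    (hf₂C1 : ContDiffOn ℝ 1 (fun p : ℝ × ℝ => f₂ p.1 p.2) {p : ℝ × ℝ | 0 ≤ p.1 ∧ 0 ≤ p.2})
    (hH1₁ : ∀ S I : ℝ, F₁ S I = I * f₁ S I)
    (hH1₂ : ∀ S I : ℝ, F₂ S I = I * f₂ S I)
    (hF₁zero : ∀ S I : ℝ, 0 ≤ S → 0 ≤ I → F₁ 0 I = 0 ∧ F₁ S 0 = 0)
    (hF₂zero : ∀ S I : ℝ, 0 ≤ S → 0 ≤ I → F₂ 0 I = 0 ∧ F₂ S 0 = 0)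
    (hdF₁S : ∀ S I : ℝ, 0 ≤ S → 0 ≤ I → HasDerivAt (fun x => F₁ x I) (F₁S S I) S)
    (hdF₁I : ∀ S I : ℝ, 0 ≤ S → 0 ≤ I → HasDerivAt (fun y => F₁ S y) (F₁I S I) I)
    (hdF₂S : ∀ S I : ℝ, 0 ≤ S → 0 ≤ I → HasDerivAt (fun x => F₂ x I) (F₂S S I) S)
    (hdF₂I : ∀ S I : ℝ, 0 ≤ S → 0 ≤ I → HasDerivAt (fun y => F₂ S y) (F₂I S I) I)
    (hdf₁S : ∀ S I : ℝ, 0 ≤ S → 0 ≤ I → HasDerivAt (fun x => f₁ x I) (f₁S S I) S)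
    (hdf₁I : ∀ S I : ℝ, 0 ≤ S → 0 ≤ I → HasDerivAt (fun y => f₁ S y) (f₁I S I) I)
    (hdf₂S : ∀ S I : ℝ, 0 ≤ S → 0 ≤ I → HasDerivAt (fun x => f₂ x I) (f₂S S I) S)
    (hdf₂I : ∀ S I : ℝ, 0 ≤ S → 0 ≤ I → HasDerivAt (fun y => f₂ S y) (f₂I S I) I)
    (hH2f₁S : ∀ S I : ℝ, 0 ≤ S → 0 ≤ I → 0 < f₁S S I)
    (hH2f₁I : ∀ S I : ℝ, 0 ≤ S → 0 ≤ I → f₁I S I ≤ 0)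
    (hH2f₂S : ∀ S I : ℝ, 0 ≤ S → 0 ≤ I → 0 < f₂S S I)
    (hH2f₂I : ∀ S I : ℝ, 0 ≤ S → 0 ≤ I → f₂I S I ≤ 0)
    (S V₁ I₁ I₂ : ℝ → ℝ)
    (hS' : ∀ t : ℝ, 0 ≤ t → HasDerivAt S (Λ - F₁ (S t) (I₁ t) - F₂ (S t) (I₂ t) - lam * S t) t)
    (hV' : ∀ t : ℝ, 0 ≤ t → HasDerivAt V₁ (r * S t - (μ + k * I₂ t) * V₁ t) t)
    (hI₁' : ∀ t : ℝ, 0 ≤ t → HasDerivAt I₁ (F₁ (S t) (I₁ t) - α₁ * I₁ t) t)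
    (hI₂' : ∀ t : ℝ, 0 ≤ t → HasDerivAt I₂ (F₂ (S t) (I₂ t) + k * I₂ t * V₁ t - α₂ * I₂ t) t)
    (g₁ g₂ : ℝ → ℝ → ℝ)
    (hg₁C1 : ContDiffOn ℝ 1 (fun p : ℝ × ℝ => g₁ p.1 p.2) {p : ℝ × ℝ | 0 ≤ p.1 ∧ 0 ≤ p.2})
    (hg₂C1 : ContDiffOn ℝ 1 (fun p : ℝ × ℝ => g₂ p.1 p.2) {p : ℝ × ℝ | 0 ≤ p.1 ∧ 0 ≤ p.2})
    (hH4₁ : ∀ Sx Ix : ℝ, f₁ Sx Ix = Sx * g₁ Sx Ix)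
    (hH4₂ : ∀ Sx Ix : ℝ, f₂ Sx Ix = Sx * g₂ Sx Ix)
    (Ss Vs Is1 Is2 : ℝ) (hSs : 0 < Ss) (hVs : 0 < Vs) (hIs1 : 0 < Is1) (hIs2 : 0 < Is2)
    (heq1 : Λ - F₁ Ss Is1 - F₂ Ss Is2 - lam * Ss = 0)
    (heq2 : r * Ss - (μ + k * Is2) * Vs = 0)
    (heq3 : F₁ Ss Is1 - α₁ * Is1 = 0)
    (heq4 : F₂ Ss Is2 + k * Is2 * Vs - α₂ * Is2 = 0)
    (hineq : ∀ Sx Vx Ix1 Ix2 : ℝ, 0 < Sx → 0 < Vx → 0 < Ix1 → 0 < Ix2 →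
      (Sx, Vx, Ix1, Ix2) ≠ (Ss, Vs, Is1, Is2) →
      F₁ Ss Is1 * (2 - Ss / Sx - Sx * g₁ Sx Ix1 / (Ss * g₁ Ss Is1)) +
      F₂ Ss Is2 * (2 - Ss / Sx - Sx * g₂ Sx Ix2 / (Ss * g₂ Ss Is2)) +
      r * Ss * (3 - Ss / Sx - Vx / Vs - Sx * Vs / (Ss * Vx)) +
      μ * Ss * (2 - Ss / Sx - Sx / Ss) +
      Ix1 * (Ss * g₁ Sx Ix1 - α₁) + Ix2 * (Ss * g₂ Sx Ix2 + k * Vs - α₂) < 0)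
    (hinit : 0 < S 0 ∧ 0 < V₁ 0 ∧ 0 < I₁ 0 ∧ 0 < I₂ 0) :
    Filter.Tendsto S Filter.atTop (nhds Ss) ∧
    Filter.Tendsto V₁ Filter.atTop (nhds Vs) ∧
    Filter.Tendsto I₁ Filter.atTop (nhds Is1) ∧
    Filter.Tendsto I₂ Filter.atTop (nhds Is2) := by
  
  classical
  obtain ⟨hS0, hV0, hI10, hI20⟩ := hinit
  have hα₁0 : 0 < α₁ := hμ.trans hα₁
  have hα₂0 : 0 < α₂ := hμ.trans hα₂
  have hlam0 : 0 < lam := by rw [hlam]; linarith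
  -- equilibrium relations for g₁, g₂
  have hga : Ss * g₁ Ss Is1 = α₁ := by
    have h3 := heq3
    rw [hH1₁, hH4₁] at h3
    have h4 : (Ss * g₁ Ss Is1 - α₁) * Is1 = 0 := by linear_combination h3
    rcases mul_eq_zero.1 h4 with h | h
    · linarith
    · exact absurd h hIs1.ne'
  have hgb : Ss * g₂ Ss Is2 + k * Vs = α₂ := by
    have h3 := heq4
    rw [hH1₂, hH4₂] at h3
    have h4 : (Ss * g₂ Ss Is2 + k * Vs - α₂) * Is2 = 0 := by linear_combination h3
    rcases mul_eq_zero.1 h4 with h | h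
    · linarith
    · exact absurd h hIs2.ne'
  have hgapos : 0 < g₁ Ss Is1 := by nlinarith
  have hgbpos : 0 < g₂ Ss Is2 := by
    have hpos : 0 < f₂ Ss Is2 := by
      apply aux_pos_of_deriv_pos hSs (by rw [hH4₂]; ring)
        (fun x hx => hdf₂S x Is2 hx.1 hIs2.le)
        (fun x hx => hH2f₂S x Is2 hx.1 hIs2.le)
    rw [hH4₂] at hpos
    nlinarith
  have hF1E : F₁ Ss Is1 = Is1 * (Ss * g₁ Ss Is1) := by rw [hH1₁, hH4₁]
  have hF2E : F₂ Ss Is2 = Is2 * (Ss * g₂ Ss Is2) := by rw [hH1₂, hH4₂]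
  have hΛeq : Λ = Is1 * (Ss * g₁ Ss Is1) + Is2 * (Ss * g₂ Ss Is2) + lam * Ss := by
    rw [← hF1E, ← hF2E]; linarith
  have hμeq : μ = r * Ss / Vs - k * Is2 := by
    have h2' : (μ + k * Is2) * Vs = r * Ss := by linarith
    field_simp [hVs.ne']
    linear_combination h2'
  -- positivity of the solution for all t ≥ 0
  have hposAll : ∀ t, 0 ≤ t → 0 < S t ∧ 0 < V₁ t ∧ 0 < I₁ t ∧ 0 < I₂ t := by
    by_contra hcon
    rw [not_forall] at hcon
    obtain ⟨T, hT⟩ := hcon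
    rw [Classical.not_imp] at hT
    obtain ⟨hT0, hTbad⟩ := hT
    set B : Set ℝ := {t | 0 ≤ t ∧ ¬(0 < S t ∧ 0 < V₁ t ∧ 0 < I₁ t ∧ 0 < I₂ t)} with hBdef
    have hBne : B.Nonempty := ⟨T, hT0, hTbad⟩
    have hBbd : BddBelow B := ⟨0, fun b hb => hb.1⟩
    set t₀ := sInf B with ht₀def
    have ht₀0 : 0 ≤ t₀ := le_csInf hBne (fun b hb => hb.1)
    have hgood : ∀ t, 0 ≤ t → t < t₀ → 0 < S t ∧ 0 < V₁ t ∧ 0 < I₁ t ∧ 0 < I₂ t := by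
      intro t h1 h2
      by_contra hng
      exact absurd (csInf_le hBbd ⟨h1, hng⟩) (not_le.2 h2)
    -- all coordinates are nonnegative on [0, t₀]
    have keynn : ∀ w : ℝ → ℝ, (∀ t, 0 ≤ t → ContinuousAt w t) → 0 < w 0 →
        (∀ t, 0 ≤ t → t < t₀ → 0 < w t) → ∀ t ∈ Set.Icc (0:ℝ) t₀, 0 ≤ w t := by
      intro w hwc hw0 hwpos t ht
      obtain ⟨h1, h2⟩ := ht
      rcases lt_or_eq_of_le h2 with h | h
      · exact (hwpos t h1 h).le
      · subst h
        rcases eq_or_lt_of_le ht₀0 with h0 | h0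
        · rw [← h0]; exact hw0.le
        · have hcw : Filter.Tendsto w (nhdsWithin t₀ (Set.Iio t₀)) (nhds (w t₀)) :=
            ((hwc t₀ ht₀0).tendsto).mono_left nhdsWithin_le_nhds
          refine ge_of_tendsto hcw ?_
          filter_upwards [Ioo_mem_nhdsLT_of_mem (Set.mem_Ioc.mpr ⟨h0, le_refl t₀⟩)] with x hx
          exact (hwpos x hx.1.le hx.2).le
    have hSnn : ∀ t ∈ Set.Icc (0:ℝ) t₀, 0 ≤ S t :=
      keynn S (fun t ht => (hS' t ht).continuousAt) hS0 (fun t h1 h2 => (hgood t h1 h2).1)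
    have hVnn : ∀ t ∈ Set.Icc (0:ℝ) t₀, 0 ≤ V₁ t :=
      keynn V₁ (fun t ht => (hV' t ht).continuousAt) hV0 (fun t h1 h2 => (hgood t h1 h2).2.1)
    have hI1nn : ∀ t ∈ Set.Icc (0:ℝ) t₀, 0 ≤ I₁ t :=
      keynn I₁ (fun t ht => (hI₁' t ht).continuousAt) hI10 (fun t h1 h2 => (hgood t h1 h2).2.2.1)
    have hI2nn : ∀ t ∈ Set.Icc (0:ℝ) t₀, 0 ≤ I₂ t :=
      keynn I₂ (fun t ht => (hI₂' t ht).continuousAt) hI20 (fun t h1 h2 => (hgood t h1 h2).2.2.2)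
    -- continuity facts on [0, t₀]
    have hScont : ContinuousOn S (Set.Icc (0:ℝ) t₀) :=
      fun t ht => ((hS' t ht.1).continuousAt).continuousWithinAt
    have hVcont : ContinuousOn V₁ (Set.Icc (0:ℝ) t₀) :=
      fun t ht => ((hV' t ht.1).continuousAt).continuousWithinAt
    have hI1cont : ContinuousOn I₁ (Set.Icc (0:ℝ) t₀) :=
      fun t ht => ((hI₁' t ht.1).continuousAt).continuousWithinAt
    have hI2cont : ContinuousOn I₂ (Set.Icc (0:ℝ) t₀) :=
      fun t ht => ((hI₂' t ht.1).continuousAt).continuousWithinAt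
    have hg1cont : ContinuousOn (fun t => g₁ (S t) (I₁ t)) (Set.Icc (0:ℝ) t₀) := by
      apply (hg₁C1.continuousOn).comp (hScont.prodMk hI1cont)
      intro t ht
      exact ⟨hSnn t ht, hI1nn t ht⟩
    have hg2cont : ContinuousOn (fun t => g₂ (S t) (I₂ t)) (Set.Icc (0:ℝ) t₀) := by
      apply (hg₂C1.continuousOn).comp (hScont.prodMk hI2cont)
      intro t ht
      exact ⟨hSnn t ht, hI2nn t ht⟩
    have hf1cont : ContinuousOn (fun t => f₁ (S t) (I₁ t)) (Set.Icc (0:ℝ) t₀) := by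
      apply (hf₁C1.continuousOn).comp (hScont.prodMk hI1cont)
      intro t ht
      exact ⟨hSnn t ht, hI1nn t ht⟩
    have hf2cont : ContinuousOn (fun t => f₂ (S t) (I₂ t)) (Set.Icc (0:ℝ) t₀) := by
      apply (hf₂C1.continuousOn).comp (hScont.prodMk hI2cont)
      intro t ht
      exact ⟨hSnn t ht, hI2nn t ht⟩
    -- bounds on compact time interval
    obtain ⟨CS, hCS⟩ := (isCompact_Icc (a := (0:ℝ)) (b := t₀)).exists_bound_of_continuousOn
      (((hI1cont.mul hg1cont).add (hI2cont.mul hg2cont)))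
    obtain ⟨CV, hCV⟩ := (isCompact_Icc (a := (0:ℝ)) (b := t₀)).exists_bound_of_continuousOn
      (hI2cont.const_smul k)
    obtain ⟨C1, hC1⟩ := (isCompact_Icc (a := (0:ℝ)) (b := t₀)).exists_bound_of_continuousOn hf1cont
    obtain ⟨C2, hC2⟩ := (isCompact_Icc (a := (0:ℝ)) (b := t₀)).exists_bound_of_continuousOn
      (hf2cont.add (hVcont.const_smul k))
    -- Grönwall-type lower bounds: all coordinates positive at t₀
    have hSpos₀ : 0 < S t₀ := by
      have := aux_gronwall (C := CS + lam) ht₀0 (fun t ht => hS' t ht.1) ?_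
      · exact lt_of_lt_of_le (mul_pos hS0 (Real.exp_pos _)) this
      intro t ht
      have e1 : F₁ (S t) (I₁ t) = S t * (I₁ t * g₁ (S t) (I₁ t)) := by rw [hH1₁, hH4₁]; ring
      have e2 : F₂ (S t) (I₂ t) = S t * (I₂ t * g₂ (S t) (I₂ t)) := by rw [hH1₂, hH4₂]; ring
      rw [e1, e2]
      have hb := hCS t ht
      rw [Real.norm_eq_abs] at hb
      have hb2 := (abs_le.1 hb).2
      have hs0 := hSnn t ht
      simp only [Pi.add_apply, Pi.mul_apply] at hb2
      linarith only [mul_nonneg hs0 (sub_nonneg.2 hb2), hΛ.le]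
    have hVpos₀ : 0 < V₁ t₀ := by
      have := aux_gronwall (C := μ + CV) ht₀0 (fun t ht => hV' t ht.1) ?_
      · exact lt_of_lt_of_le (mul_pos hV0 (Real.exp_pos _)) this
      intro t ht
      have hb := hCV t ht
      rw [Real.norm_eq_abs] at hb
      have hb2 := (abs_le.1 hb).2
      simp only [Pi.smul_apply, smul_eq_mul] at hb2
      have hv0 := hVnn t ht
      have hs0 := hSnn t ht
      linarith only [mul_nonneg hv0 (sub_nonneg.2 hb2), mul_nonneg hr.le hs0]
    have hI1pos₀ : 0 < I₁ t₀ := by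
      have := aux_gronwall (C := C1 + α₁) ht₀0 (fun t ht => hI₁' t ht.1) ?_
      · exact lt_of_lt_of_le (mul_pos hI10 (Real.exp_pos _)) this
      intro t ht
      have e1 : F₁ (S t) (I₁ t) = I₁ t * f₁ (S t) (I₁ t) := hH1₁ _ _
      rw [e1]
      have hb := hC1 t ht
      rw [Real.norm_eq_abs] at hb
      have hb1 := (abs_le.1 hb).1
      have hi0 := hI1nn t ht
      linarith only [mul_nonneg hi0 (by linarith only [hb1] : (0:ℝ) ≤ f₁ (S t) (I₁ t) + C1)]
    have hI2pos₀ : 0 < I₂ t₀ := by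
      have := aux_gronwall (C := C2 + α₂) ht₀0 (fun t ht => hI₂' t ht.1) ?_
      · exact lt_of_lt_of_le (mul_pos hI20 (Real.exp_pos _)) this
      intro t ht
      have e2 : F₂ (S t) (I₂ t) = I₂ t * f₂ (S t) (I₂ t) := hH1₂ _ _
      rw [e2]
      have hb := hC2 t ht
      rw [Real.norm_eq_abs] at hb
      have hb1 := (abs_le.1 hb).1
      simp only [Pi.add_apply, Pi.smul_apply, smul_eq_mul] at hb1
      have hi0 := hI2nn t ht
      linarith only [mul_nonneg hi0 (by linarith only [hb1] : (0:ℝ) ≤ f₂ (S t) (I₂ t) + k * V₁ t + C2)]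
    -- but then all coordinates are positive in a neighbourhood of t₀, contradiction
    have hev : ∀ᶠ x in nhds t₀, 0 < S x ∧ 0 < V₁ x ∧ 0 < I₁ x ∧ 0 < I₂ x := by
      have e1 : ∀ᶠ x in nhds t₀, S x ∈ Set.Ioi (0:ℝ) :=
        ((hS' t₀ ht₀0).continuousAt).eventually_mem (Ioi_mem_nhds hSpos₀)
      have e2 : ∀ᶠ x in nhds t₀, V₁ x ∈ Set.Ioi (0:ℝ) :=
        ((hV' t₀ ht₀0).continuousAt).eventually_mem (Ioi_mem_nhds hVpos₀)
      have e3 : ∀ᶠ x in nhds t₀, I₁ x ∈ Set.Ioi (0:ℝ) :=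
        ((hI₁' t₀ ht₀0).continuousAt).eventually_mem (Ioi_mem_nhds hI1pos₀)
      have e4 : ∀ᶠ x in nhds t₀, I₂ x ∈ Set.Ioi (0:ℝ) :=
        ((hI₂' t₀ ht₀0).continuousAt).eventually_mem (Ioi_mem_nhds hI2pos₀)
      filter_upwards [e1, e2, e3, e4] with x x1 x2 x3 x4
      exact ⟨x1, x2, x3, x4⟩
    obtain ⟨ε, hε0, hεprop⟩ := Metric.eventually_nhds_iff.1 hev
    have hlb : ∀ b ∈ B, t₀ + ε / 2 ≤ b := by
      intro b hb
      by_contra hlt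
      push_neg at hlt
      have hbt₀ : t₀ ≤ b := csInf_le hBbd hb
      have hd : dist b t₀ < ε := by
        rw [Real.dist_eq, abs_of_nonneg (by linarith)]
        linarith
      exact hb.2 (hεprop hd)
    have : t₀ + ε / 2 ≤ t₀ := le_csInf hBne hlb
    linarith

  have hSpos : ∀ t, 0 ≤ t → 0 < S t := fun t ht => (hposAll t ht).1
  have hVpos : ∀ t, 0 ≤ t → 0 < V₁ t := fun t ht => (hposAll t ht).2.1
  have hI1pos : ∀ t, 0 ≤ t → 0 < I₁ t := fun t ht => (hposAll t ht).2.2.1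
  have hI2pos : ∀ t, 0 ≤ t → 0 < I₂ t := fun t ht => (hposAll t ht).2.2.2
  -- derivative of the Lyapunov function equals Φ
  have hHd : ∀ t, 0 ≤ t → HasDerivAt (HAux Ss Vs Is1 Is2 S V₁ I₁ I₂)
      (PhiAux F₁ F₂ g₁ g₂ r μ k α₁ α₂ Ss Vs Is1 Is2 (S t) (V₁ t) (I₁ t) (I₂ t)) t := by
    intro t ht
    obtain ⟨h1, h2, h3, h4⟩ := hposAll t ht
    have dS := hS' t ht
    have dV := hV' t ht
    have dI1 := hI₁' t ht
    have dI2 := hI₂' t ht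
    have hd1 := dS.sub ((dS.log h1.ne').const_mul Ss)
    have hd2 := dV.sub ((dV.log h2.ne').const_mul Vs)
    have hd3 := dI1.sub ((dI1.log h3.ne').const_mul Is1)
    have hd4 := dI2.sub ((dI2.log h4.ne').const_mul Is2)
    have hsum := ((hd1.add hd2).add hd3).add hd4
    have hval :
        ((Λ - F₁ (S t) (I₁ t) - F₂ (S t) (I₂ t) - lam * S t) -
          Ss * ((Λ - F₁ (S t) (I₁ t) - F₂ (S t) (I₂ t) - lam * S t) / S t) +
        ((r * S t - (μ + k * I₂ t) * V₁ t) - Vs * ((r * S t - (μ + k * I₂ t) * V₁ t) / V₁ t)) +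
        ((F₁ (S t) (I₁ t) - α₁ * I₁ t) - Is1 * ((F₁ (S t) (I₁ t) - α₁ * I₁ t) / I₁ t)) +
        ((F₂ (S t) (I₂ t) + k * I₂ t * V₁ t - α₂ * I₂ t) -
          Is2 * ((F₂ (S t) (I₂ t) + k * I₂ t * V₁ t - α₂ * I₂ t) / I₂ t)))
        = PhiAux F₁ F₂ g₁ g₂ r μ k α₁ α₂ Ss Vs Is1 Is2 (S t) (V₁ t) (I₁ t) (I₂ t) := by
      have e1 : F₁ (S t) (I₁ t) = I₁ t * (S t * g₁ (S t) (I₁ t)) := by rw [hH1₁, hH4₁]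
      have e2 : F₂ (S t) (I₂ t) = I₂ t * (S t * g₂ (S t) (I₂ t)) := by rw [hH1₂, hH4₂]
      rw [PhiAux, e1, e2, hF1E, hF2E]
      rw [← key_alg Ss Vs Is1 Is2 (S t) (V₁ t) (I₁ t) (I₂ t) r μ k α₁ α₂ lam Λ
        (g₁ (S t) (I₁ t)) (g₂ (S t) (I₂ t)) (g₁ Ss Is1) (g₂ Ss Is2)
        (Is1 * (Ss * g₁ Ss Is1)) (Is2 * (Ss * g₂ Ss Is2))
        hSs.ne' hVs.ne' h1.ne' h2.ne' h3.ne' h4.ne' hgapos.ne' hgbpos.ne'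
        hga hgb rfl rfl hlam hΛeq hμeq]
      field_simp
    have hsum' : HasDerivAt (HAux Ss Vs Is1 Is2 S V₁ I₁ I₂)
        (PhiAux F₁ F₂ g₁ g₂ r μ k α₁ α₂ Ss Vs Is1 Is2 (S t) (V₁ t) (I₁ t) (I₂ t)) t := by
      rw [← hval]
      exact hsum
    exact hsum'
  -- Φ vanishes at the equilibrium
  have hPhiE : PhiAux F₁ F₂ g₁ g₂ r μ k α₁ α₂ Ss Vs Is1 Is2 Ss Vs Is1 Is2 = 0 := by
    rw [PhiAux]
    rw [div_self hSs.ne', div_self hVs.ne',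
      div_self (mul_ne_zero hSs.ne' hgapos.ne'),
      div_self (mul_ne_zero hSs.ne' hgbpos.ne'),
      div_self (mul_ne_zero hSs.ne' hVs.ne')]
    rw [hF1E, hF2E, hga, hgb]
    ring
  -- Φ is nonpositive along the solution
  have hPhile : ∀ t, 0 ≤ t →
      PhiAux F₁ F₂ g₁ g₂ r μ k α₁ α₂ Ss Vs Is1 Is2 (S t) (V₁ t) (I₁ t) (I₂ t) ≤ 0 := by
    intro t ht
    obtain ⟨h1, h2, h3, h4⟩ := hposAll t ht
    by_cases hc : (S t, V₁ t, I₁ t, I₂ t) = (Ss, Vs, Is1, Is2)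
    · rw [Prod.mk.injEq, Prod.mk.injEq, Prod.mk.injEq] at hc
      rw [hc.1, hc.2.1, hc.2.2.1, hc.2.2.2, hPhiE]
    · have := hineq (S t) (V₁ t) (I₁ t) (I₂ t) h1 h2 h3 h4 hc
      rw [PhiAux]
      linarith
  -- the Lyapunov function is nonincreasing
  have hHle : ∀ t, 0 ≤ t → HAux Ss Vs Is1 Is2 S V₁ I₁ I₂ t ≤ HAux Ss Vs Is1 Is2 S V₁ I₁ I₂ 0 := by
    intro t ht
    have := aux_decay (ε := 0) ht (fun s hs => hHd s hs.1)
      (fun s hs => by simpa using hPhile s hs.1)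
    simpa using this
  -- coordinatewise confinement bounds
  obtain ⟨AS, hASb⟩ : ∃ A, ∀ t, 0 ≤ t → S t - Ss * Real.log (S t) ≤ A := by
    refine ⟨HAux Ss Vs Is1 Is2 S V₁ I₁ I₂ 0
      - (Vs - Vs * Real.log Vs) - (Is1 - Is1 * Real.log Is1) - (Is2 - Is2 * Real.log Is2), ?_⟩
    intro t ht
    have h : (S t - Ss * Real.log (S t)) + (V₁ t - Vs * Real.log (V₁ t)) +
        (I₁ t - Is1 * Real.log (I₁ t)) + (I₂ t - Is2 * Real.log (I₂ t))
        ≤ HAux Ss Vs Is1 Is2 S V₁ I₁ I₂ 0 := hHle t ht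
    have h2 := aux_log_lower hVs (hVpos t ht)
    have h3 := aux_log_lower hIs1 (hI1pos t ht)
    have h4 := aux_log_lower hIs2 (hI2pos t ht)
    linarith
  obtain ⟨AV, hAVb⟩ : ∃ A, ∀ t, 0 ≤ t → V₁ t - Vs * Real.log (V₁ t) ≤ A := by
    refine ⟨HAux Ss Vs Is1 Is2 S V₁ I₁ I₂ 0
      - (Ss - Ss * Real.log Ss) - (Is1 - Is1 * Real.log Is1) - (Is2 - Is2 * Real.log Is2), ?_⟩
    intro t ht
    have h : (S t - Ss * Real.log (S t)) + (V₁ t - Vs * Real.log (V₁ t)) +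
        (I₁ t - Is1 * Real.log (I₁ t)) + (I₂ t - Is2 * Real.log (I₂ t))
        ≤ HAux Ss Vs Is1 Is2 S V₁ I₁ I₂ 0 := hHle t ht
    have h2 := aux_log_lower hSs (hSpos t ht)
    have h3 := aux_log_lower hIs1 (hI1pos t ht)
    have h4 := aux_log_lower hIs2 (hI2pos t ht)
    linarith
  obtain ⟨A1, hA1b⟩ : ∃ A, ∀ t, 0 ≤ t → I₁ t - Is1 * Real.log (I₁ t) ≤ A := by
    refine ⟨HAux Ss Vs Is1 Is2 S V₁ I₁ I₂ 0
      - (Ss - Ss * Real.log Ss) - (Vs - Vs * Real.log Vs) - (Is2 - Is2 * Real.log Is2), ?_⟩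
    intro t ht
    have h : (S t - Ss * Real.log (S t)) + (V₁ t - Vs * Real.log (V₁ t)) +
        (I₁ t - Is1 * Real.log (I₁ t)) + (I₂ t - Is2 * Real.log (I₂ t))
        ≤ HAux Ss Vs Is1 Is2 S V₁ I₁ I₂ 0 := hHle t ht
    have h2 := aux_log_lower hSs (hSpos t ht)
    have h3 := aux_log_lower hVs (hVpos t ht)
    have h4 := aux_log_lower hIs2 (hI2pos t ht)
    linarith
  obtain ⟨A2, hA2b⟩ : ∃ A, ∀ t, 0 ≤ t → I₂ t - Is2 * Real.log (I₂ t) ≤ A := by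
    refine ⟨HAux Ss Vs Is1 Is2 S V₁ I₁ I₂ 0
      - (Ss - Ss * Real.log Ss) - (Vs - Vs * Real.log Vs) - (Is1 - Is1 * Real.log Is1), ?_⟩
    intro t ht
    have h : (S t - Ss * Real.log (S t)) + (V₁ t - Vs * Real.log (V₁ t)) +
        (I₁ t - Is1 * Real.log (I₁ t)) + (I₂ t - Is2 * Real.log (I₂ t))
        ≤ HAux Ss Vs Is1 Is2 S V₁ I₁ I₂ 0 := hHle t ht
    have h2 := aux_log_lower hSs (hSpos t ht)
    have h3 := aux_log_lower hVs (hVpos t ht)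
    have h4 := aux_log_lower hIs1 (hI1pos t ht)
    linarith
  -- the box
  set mS := Real.exp (-(AS / Ss)) with hmSdef
  set MS := 2 * AS + 2 * Ss * Real.log (2 * Ss) with hMSdef
  set mV := Real.exp (-(AV / Vs)) with hmVdef
  set MV := 2 * AV + 2 * Vs * Real.log (2 * Vs) with hMVdef
  set m1 := Real.exp (-(A1 / Is1)) with hm1def
  set M1 := 2 * A1 + 2 * Is1 * Real.log (2 * Is1) with hM1def
  set m2 := Real.exp (-(A2 / Is2)) with hm2def
  set M2 := 2 * A2 + 2 * Is2 * Real.log (2 * Is2) with hM2def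
  have hmS0 : 0 < mS := Real.exp_pos _
  have hmV0 : 0 < mV := Real.exp_pos _
  have hm10 : 0 < m1 := Real.exp_pos _
  have hm20 : 0 < m2 := Real.exp_pos _
  have hSin : ∀ t, 0 ≤ t → S t ∈ Set.Icc mS MS := fun t ht =>
    ⟨aux_log_lb hSs (hSpos t ht) (hASb t ht), aux_log_ub hSs (hSpos t ht) (hASb t ht)⟩
  have hVin : ∀ t, 0 ≤ t → V₁ t ∈ Set.Icc mV MV := fun t ht =>
    ⟨aux_log_lb hVs (hVpos t ht) (hAVb t ht), aux_log_ub hVs (hVpos t ht) (hAVb t ht)⟩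
  have hI1in : ∀ t, 0 ≤ t → I₁ t ∈ Set.Icc m1 M1 := fun t ht =>
    ⟨aux_log_lb hIs1 (hI1pos t ht) (hA1b t ht), aux_log_ub hIs1 (hI1pos t ht) (hA1b t ht)⟩
  have hI2in : ∀ t, 0 ≤ t → I₂ t ∈ Set.Icc m2 M2 := fun t ht =>
    ⟨aux_log_lb hIs2 (hI2pos t ht) (hA2b t ht), aux_log_ub hIs2 (hI2pos t ht) (hA2b t ht)⟩
  set Box : Set (ℝ × ℝ × ℝ × ℝ) :=
    (Set.Icc mS MS) ×ˢ ((Set.Icc mV MV) ×ˢ ((Set.Icc m1 M1) ×ˢ (Set.Icc m2 M2))) with hBoxdef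
  have hBoxcpt : IsCompact Box :=
    isCompact_Icc.prod (isCompact_Icc.prod (isCompact_Icc.prod isCompact_Icc))
  have huBox : ∀ t, 0 ≤ t → (S t, V₁ t, I₁ t, I₂ t) ∈ Box := fun t ht =>
    ⟨hSin t ht, hVin t ht, hI1in t ht, hI2in t ht⟩
  -- continuity of the vector field components on the box
  have hproj13 : Continuous (fun q : ℝ × ℝ × ℝ × ℝ => (q.1, q.2.2.1)) :=
    continuous_fst.prodMk (continuous_fst.comp (continuous_snd.comp continuous_snd))
  have hproj14 : Continuous (fun q : ℝ × ℝ × ℝ × ℝ => (q.1, q.2.2.2)) :=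
    continuous_fst.prodMk (continuous_snd.comp (continuous_snd.comp continuous_snd))
  have hmaps13 : Set.MapsTo (fun q : ℝ × ℝ × ℝ × ℝ => (q.1, q.2.2.1)) Box
      {p : ℝ × ℝ | 0 ≤ p.1 ∧ 0 ≤ p.2} := by
    rintro ⟨a, b, c, d⟩ ⟨ha, hb, hc, hd⟩
    exact ⟨(hmS0.trans_le ha.1).le, (hm10.trans_le hc.1).le⟩
  have hmaps14 : Set.MapsTo (fun q : ℝ × ℝ × ℝ × ℝ => (q.1, q.2.2.2)) Box
      {p : ℝ × ℝ | 0 ≤ p.1 ∧ 0 ≤ p.2} := by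
    rintro ⟨a, b, c, d⟩ ⟨ha, hb, hc, hd⟩
    exact ⟨(hmS0.trans_le ha.1).le, (hm20.trans_le hd.1).le⟩
  have hcF1Box : ContinuousOn (fun q : ℝ × ℝ × ℝ × ℝ => F₁ q.1 q.2.2.1) Box :=
    (hF₁C1.continuousOn).comp (hproj13.continuousOn) hmaps13
  have hcF2Box : ContinuousOn (fun q : ℝ × ℝ × ℝ × ℝ => F₂ q.1 q.2.2.2) Box :=
    (hF₂C1.continuousOn).comp (hproj14.continuousOn) hmaps14
  -- speed bound
  obtain ⟨CmS, hCmS⟩ := hBoxcpt.exists_bound_of_continuousOn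
    (f := fun q : ℝ × ℝ × ℝ × ℝ => Λ - F₁ q.1 q.2.2.1 - F₂ q.1 q.2.2.2 - lam * q.1)
    (((continuousOn_const.sub hcF1Box).sub hcF2Box).sub
      (continuousOn_const.mul continuous_fst.continuousOn))
  obtain ⟨CmV, hCmV⟩ := hBoxcpt.exists_bound_of_continuousOn
    (f := fun q : ℝ × ℝ × ℝ × ℝ => r * q.1 - (μ + k * q.2.2.2) * q.2.1)
    ((continuousOn_const.mul continuous_fst.continuousOn).sub
      ((continuousOn_const.add (continuousOn_const.mul
        (continuous_snd.comp (continuous_snd.comp continuous_snd)).continuousOn)).mul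
        (continuous_fst.comp continuous_snd).continuousOn))
  obtain ⟨Cm1, hCm1⟩ := hBoxcpt.exists_bound_of_continuousOn
    (f := fun q : ℝ × ℝ × ℝ × ℝ => F₁ q.1 q.2.2.1 - α₁ * q.2.2.1)
    (hcF1Box.sub (continuousOn_const.mul
      (continuous_fst.comp (continuous_snd.comp continuous_snd)).continuousOn))
  obtain ⟨Cm2, hCm2⟩ := hBoxcpt.exists_bound_of_continuousOn
    (f := fun q : ℝ × ℝ × ℝ × ℝ => F₂ q.1 q.2.2.2 + k * q.2.2.2 * q.2.1 - α₂ * q.2.2.2)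
    ((hcF2Box.add ((continuousOn_const.mul
      (continuous_snd.comp (continuous_snd.comp continuous_snd)).continuousOn).mul
      (continuous_fst.comp continuous_snd).continuousOn)).sub
      (continuousOn_const.mul
        (continuous_snd.comp (continuous_snd.comp continuous_snd)).continuousOn))
  set Cm := |CmS| + |CmV| + |Cm1| + |Cm2| + 1 with hCmdef
  have hCm0 : 0 < Cm := by
    have := abs_nonneg CmS; have := abs_nonneg CmV
    have := abs_nonneg Cm1; have := abs_nonneg Cm2
    rw [hCmdef]; linarith
  have hspS : ∀ τ, 0 ≤ τ → |Λ - F₁ (S τ) (I₁ τ) - F₂ (S τ) (I₂ τ) - lam * S τ| ≤ Cm := by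
    intro τ hτ
    have h := hCmS (S τ, V₁ τ, I₁ τ, I₂ τ) (huBox τ hτ)
    rw [Real.norm_eq_abs] at h
    have := le_abs_self CmS
    have := abs_nonneg CmV; have := abs_nonneg Cm1; have := abs_nonneg Cm2
    rw [hCmdef]; simp only at h; linarith
  have hspV : ∀ τ, 0 ≤ τ → |r * S τ - (μ + k * I₂ τ) * V₁ τ| ≤ Cm := by
    intro τ hτ
    have h := hCmV (S τ, V₁ τ, I₁ τ, I₂ τ) (huBox τ hτ)
    rw [Real.norm_eq_abs] at h
    have := le_abs_self CmV
    have := abs_nonneg CmS; have := abs_nonneg Cm1; have := abs_nonneg Cm2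
    rw [hCmdef]; simp only at h; linarith
  have hsp1 : ∀ τ, 0 ≤ τ → |F₁ (S τ) (I₁ τ) - α₁ * I₁ τ| ≤ Cm := by
    intro τ hτ
    have h := hCm1 (S τ, V₁ τ, I₁ τ, I₂ τ) (huBox τ hτ)
    rw [Real.norm_eq_abs] at h
    have := le_abs_self Cm1
    have := abs_nonneg CmS; have := abs_nonneg CmV; have := abs_nonneg Cm2
    rw [hCmdef]; simp only at h; linarith
  have hsp2 : ∀ τ, 0 ≤ τ → |F₂ (S τ) (I₂ τ) + k * I₂ τ * V₁ τ - α₂ * I₂ τ| ≤ Cm := by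
    intro τ hτ
    have h := hCm2 (S τ, V₁ τ, I₁ τ, I₂ τ) (huBox τ hτ)
    rw [Real.norm_eq_abs] at h
    have := le_abs_self Cm2
    have := abs_nonneg CmS; have := abs_nonneg CmV; have := abs_nonneg Cm1
    rw [hCmdef]; simp only at h; linarith
  -- Lipschitz estimates
  have hLip : ∀ (w dw : ℝ → ℝ), (∀ τ, 0 ≤ τ → HasDerivAt w (dw τ) τ) →
      (∀ τ, 0 ≤ τ → |dw τ| ≤ Cm) →
      ∀ a, 0 ≤ a → ∀ b, 0 ≤ b → |w b - w a| ≤ Cm * |b - a| := by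
    intro w dw hd hb a ha b hbm
    have := Convex.norm_image_sub_le_of_norm_hasDerivWithin_le
      (f := w) (f' := dw) (s := Set.Ici (0:ℝ)) (C := Cm)
      (fun x hx => (hd x hx).hasDerivWithinAt)
      (fun x hx => by rw [Real.norm_eq_abs]; exact hb x hx)
      (convex_Ici 0) ha hbm
    simpa [Real.norm_eq_abs] using this
  -- continuity of Φ at positive points
  have hPhiCont : ∀ p : ℝ × ℝ × ℝ × ℝ, 0 < p.1 → 0 < p.2.1 → 0 < p.2.2.1 → 0 < p.2.2.2 →
      ContinuousAt (fun q : ℝ × ℝ × ℝ × ℝ =>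
        PhiAux F₁ F₂ g₁ g₂ r μ k α₁ α₂ Ss Vs Is1 Is2 q.1 q.2.1 q.2.2.1 q.2.2.2) p := by
    intro p hp1 hp2 hp3 hp4
    have hopenQ : IsOpen {pr : ℝ × ℝ | 0 < pr.1 ∧ 0 < pr.2} :=
      (isOpen_lt continuous_const continuous_fst).inter
        (isOpen_lt continuous_const continuous_snd)
    have hquad13 : {pr : ℝ × ℝ | 0 ≤ pr.1 ∧ 0 ≤ pr.2} ∈ nhds (p.1, p.2.2.1) :=
      Filter.mem_of_superset (hopenQ.mem_nhds ⟨hp1, hp3⟩) (fun x hx => ⟨hx.1.le, hx.2.le⟩)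
    have hquad14 : {pr : ℝ × ℝ | 0 ≤ pr.1 ∧ 0 ≤ pr.2} ∈ nhds (p.1, p.2.2.2) :=
      Filter.mem_of_superset (hopenQ.mem_nhds ⟨hp1, hp4⟩) (fun x hx => ⟨hx.1.le, hx.2.le⟩)
    have hf13 : ContinuousAt (fun q : ℝ × ℝ × ℝ × ℝ => (q.1, q.2.2.1)) p :=
      hproj13.continuousAt
    have hf14 : ContinuousAt (fun q : ℝ × ℝ × ℝ × ℝ => (q.1, q.2.2.2)) p :=
      hproj14.continuousAt
    have hg1' : ContinuousAt (fun pr : ℝ × ℝ => g₁ pr.1 pr.2) (p.1, p.2.2.1) :=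
      (hg₁C1.continuousOn).continuousAt hquad13
    have hg2' : ContinuousAt (fun pr : ℝ × ℝ => g₂ pr.1 pr.2) (p.1, p.2.2.2) :=
      (hg₂C1.continuousOn).continuousAt hquad14
    have hg1at : ContinuousAt (fun q : ℝ × ℝ × ℝ × ℝ => g₁ q.1 q.2.2.1) p :=
      ContinuousAt.comp (x := p) (f := fun q : ℝ × ℝ × ℝ × ℝ => (q.1, q.2.2.1)) hg1' hf13
    have hg2at : ContinuousAt (fun q : ℝ × ℝ × ℝ × ℝ => g₂ q.1 q.2.2.2) p :=
      ContinuousAt.comp (x := p) (f := fun q : ℝ × ℝ × ℝ × ℝ => (q.1, q.2.2.2)) hg2' hf14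
    have hc1 : ContinuousAt (fun q : ℝ × ℝ × ℝ × ℝ => q.1) p := continuous_fst.continuousAt
    have hc2 : ContinuousAt (fun q : ℝ × ℝ × ℝ × ℝ => q.2.1) p :=
      (continuous_fst.comp continuous_snd).continuousAt
    have hc3 : ContinuousAt (fun q : ℝ × ℝ × ℝ × ℝ => q.2.2.1) p :=
      (continuous_fst.comp (continuous_snd.comp continuous_snd)).continuousAt
    have hc4 : ContinuousAt (fun q : ℝ × ℝ × ℝ × ℝ => q.2.2.2) p :=
      (continuous_snd.comp (continuous_snd.comp continuous_snd)).continuousAt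
    show ContinuousAt (fun q : ℝ × ℝ × ℝ × ℝ =>
      F₁ Ss Is1 * (2 - Ss / q.1 - q.1 * g₁ q.1 q.2.2.1 / (Ss * g₁ Ss Is1)) +
      F₂ Ss Is2 * (2 - Ss / q.1 - q.1 * g₂ q.1 q.2.2.2 / (Ss * g₂ Ss Is2)) +
      r * Ss * (3 - Ss / q.1 - q.2.1 / Vs - q.1 * Vs / (Ss * q.2.1)) +
      μ * Ss * (2 - Ss / q.1 - q.1 / Ss) +
      q.2.2.1 * (Ss * g₁ q.1 q.2.2.1 - α₁) + q.2.2.2 * (Ss * g₂ q.1 q.2.2.2 + k * Vs - α₂)) p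
    have hT1 : ContinuousAt (fun q : ℝ × ℝ × ℝ × ℝ =>
        F₁ Ss Is1 * (2 - Ss / q.1 - q.1 * g₁ q.1 q.2.2.1 / (Ss * g₁ Ss Is1))) p :=
      continuousAt_const.mul ((continuousAt_const.sub
        (continuousAt_const.div hc1 hp1.ne')).sub ((hc1.mul hg1at).div_const _))
    have hT2 : ContinuousAt (fun q : ℝ × ℝ × ℝ × ℝ =>
        F₂ Ss Is2 * (2 - Ss / q.1 - q.1 * g₂ q.1 q.2.2.2 / (Ss * g₂ Ss Is2))) p :=
      continuousAt_const.mul ((continuousAt_const.sub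
        (continuousAt_const.div hc1 hp1.ne')).sub ((hc1.mul hg2at).div_const _))
    have hT3 : ContinuousAt (fun q : ℝ × ℝ × ℝ × ℝ =>
        r * Ss * (3 - Ss / q.1 - q.2.1 / Vs - q.1 * Vs / (Ss * q.2.1))) p :=
      continuousAt_const.mul (((continuousAt_const.sub
        (continuousAt_const.div hc1 hp1.ne')).sub (hc2.div_const _)).sub
        ((hc1.mul continuousAt_const).div (continuousAt_const.mul hc2)
          (mul_ne_zero hSs.ne' hp2.ne')))
    have hT4 : ContinuousAt (fun q : ℝ × ℝ × ℝ × ℝ =>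
        μ * Ss * (2 - Ss / q.1 - q.1 / Ss)) p :=
      continuousAt_const.mul ((continuousAt_const.sub
        (continuousAt_const.div hc1 hp1.ne')).sub (hc1.div_const _))
    have hT5 : ContinuousAt (fun q : ℝ × ℝ × ℝ × ℝ =>
        q.2.2.1 * (Ss * g₁ q.1 q.2.2.1 - α₁)) p :=
      hc3.mul ((continuousAt_const.mul hg1at).sub continuousAt_const)
    have hT6 : ContinuousAt (fun q : ℝ × ℝ × ℝ × ℝ =>
        q.2.2.2 * (Ss * g₂ q.1 q.2.2.2 + k * Vs - α₂)) p :=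
      hc4.mul (((continuousAt_const.mul hg2at).add continuousAt_const).sub continuousAt_const)
    exact ((((hT1.add hT2).add hT3).add hT4).add hT5).add hT6
  -- main convergence statement for the 4-tuple
  have hmain : Filter.Tendsto (fun t => (S t, V₁ t, I₁ t, I₂ t)) Filter.atTop
      (nhds (Ss, Vs, Is1, Is2)) := by
    by_contra hcon
    rw [Metric.tendsto_nhds] at hcon
    push_neg at hcon
    obtain ⟨ρ, hρ0, hfreq⟩ := hcon
    set Fl := Filter.atTop ⊓ Filter.principal
      {t : ℝ | ρ ≤ dist (S t, V₁ t, I₁ t, I₂ t) (Ss, Vs, Is1, Is2)} with hFldef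
    haveI hFne : Fl.NeBot := Filter.frequently_iff_neBot.1 hfreq
    have hmapBox : Filter.map (fun t => (S t, V₁ t, I₁ t, I₂ t)) Fl ≤ Filter.principal Box := by
      refine Filter.le_principal_iff.2 ?_
      rw [Filter.mem_map]
      have hsub : Set.Ici (0:ℝ) ⊆ (fun t => (S t, V₁ t, I₁ t, I₂ t)) ⁻¹' Box :=
        fun t ht => huBox t ht
      exact Filter.mem_inf_of_left (Filter.mem_of_superset (Filter.Ici_mem_atTop 0) hsub)
    obtain ⟨p, hpBox, hpcl⟩ := hBoxcpt.exists_clusterPt hmapBox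
    have hpC : ρ ≤ dist p (Ss, Vs, Is1, Is2) := by
      have hCclosed : IsClosed {q : ℝ × ℝ × ℝ × ℝ | ρ ≤ dist q (Ss, Vs, Is1, Is2)} :=
        isClosed_le continuous_const (continuous_id.dist continuous_const)
      have hle : Filter.map (fun t => (S t, V₁ t, I₁ t, I₂ t)) Fl ≤
          Filter.principal {q : ℝ × ℝ × ℝ × ℝ | ρ ≤ dist q (Ss, Vs, Is1, Is2)} := by
        refine Filter.le_principal_iff.2 ?_
        rw [Filter.mem_map]
        refine Filter.mem_inf_of_right ?_
        refine Filter.mem_principal.2 ?_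
        intro t ht
        exact ht
      have hcp := hpcl.mono hle
      have hmem : p ∈ closure {q : ℝ × ℝ × ℝ × ℝ | ρ ≤ dist q (Ss, Vs, Is1, Is2)} :=
        mem_closure_iff_clusterPt.2 hcp
      rwa [hCclosed.closure_eq] at hmem
    have hpne : p ≠ (Ss, Vs, Is1, Is2) := by
      intro h
      rw [h, dist_self] at hpC
      linarith
    obtain ⟨p1, p2, p3, p4⟩ := p
    obtain ⟨hb1, hb2, hb3, hb4⟩ := hpBox
    have hp1 : 0 < p1 := hmS0.trans_le hb1.1
    have hp2 : 0 < p2 := hmV0.trans_le hb2.1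
    have hp3 : 0 < p3 := hm10.trans_le hb3.1
    have hp4 : 0 < p4 := hm20.trans_le hb4.1
    have hPhip : PhiAux F₁ F₂ g₁ g₂ r μ k α₁ α₂ Ss Vs Is1 Is2 p1 p2 p3 p4 < 0 := by
      have := hineq p1 p2 p3 p4 hp1 hp2 hp3 hp4 hpne
      rw [PhiAux]
      exact this
    set ε := -(PhiAux F₁ F₂ g₁ g₂ r μ k α₁ α₂ Ss Vs Is1 Is2 p1 p2 p3 p4) / 2 with hεdef
    have hε0 : 0 < ε := by rw [hεdef]; linarith
    have hevP : ∀ᶠ q in nhds ((p1, p2, p3, p4) : ℝ × ℝ × ℝ × ℝ),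
        (fun q : ℝ × ℝ × ℝ × ℝ =>
          PhiAux F₁ F₂ g₁ g₂ r μ k α₁ α₂ Ss Vs Is1 Is2 q.1 q.2.1 q.2.2.1 q.2.2.2) q
          ∈ Set.Iio (-ε) :=
      (hPhiCont (p1, p2, p3, p4) hp1 hp2 hp3 hp4).eventually_mem
        (Iio_mem_nhds (by rw [hεdef]; linarith))
    obtain ⟨ρ₀, hρ₀0, hρ₀⟩ := Metric.eventually_nhds_iff.1 hevP
    have hfreq2 : ∀ N : ℝ, ∃ t, N ≤ t ∧
        dist ((S t, V₁ t, I₁ t, I₂ t) : ℝ × ℝ × ℝ × ℝ) (p1, p2, p3, p4) < ρ₀ / 4 := by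
      have hm : MapClusterPt ((p1, p2, p3, p4) : ℝ × ℝ × ℝ × ℝ) Fl
          (fun t => (S t, V₁ t, I₁ t, I₂ t)) := hpcl
      have hfr := (mapClusterPt_iff_frequently.1 hm) (Metric.ball (p1, p2, p3, p4) (ρ₀ / 4))
        (Metric.ball_mem_nhds _ (by linarith))
      have hfr2 : ∃ᶠ t in Filter.atTop,
          dist ((S t, V₁ t, I₁ t, I₂ t) : ℝ × ℝ × ℝ × ℝ) (p1, p2, p3, p4) < ρ₀ / 4 := by
        exact Filter.Frequently.filter_mono
          (hfr.mono (fun t ht => by simpa [Metric.mem_ball] using ht)) inf_le_left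
      intro N
      obtain ⟨t, ht1, ht2⟩ := Filter.frequently_atTop.1 hfr2 N
      exact ⟨t, ht1, ht2⟩
    choose Tn hTn1 hTn2 using hfreq2
    set Δ := (ρ₀ / 4) / Cm with hΔdef
    have hΔ0 : 0 < Δ := by rw [hΔdef]; positivity
    set seq : ℕ → ℝ := fun n => Nat.recAux (Tn 0) (fun _ prev => Tn (prev + Δ)) n with hseqdef
    have hseq0 : 0 ≤ seq 0 := hTn1 0
    have hseqstep : ∀ n, seq n + Δ ≤ seq (n + 1) := fun n => hTn1 (seq n + Δ)
    have hseqnn : ∀ n, 0 ≤ seq n := by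
      intro n
      induction n with
      | zero => exact hseq0
      | succ m ih => have := hseqstep m; linarith
    have hseqclose : ∀ n,
        dist ((S (seq n), V₁ (seq n), I₁ (seq n), I₂ (seq n)) : ℝ × ℝ × ℝ × ℝ)
          (p1, p2, p3, p4) < ρ₀ / 4 := by
      intro n
      cases n with
      | zero => exact hTn2 0
      | succ m => exact hTn2 (seq m + Δ)
    have hdistlem : ∀ a1 a2 a3 a4 b1 b2 b3 b4 : ℝ,
        dist ((a1, a2, a3, a4) : ℝ × ℝ × ℝ × ℝ) (b1, b2, b3, b4) =
        max (dist a1 b1) (max (dist a2 b2) (max (dist a3 b3) (dist a4 b4))) := by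
      intro a1 a2 a3 a4 b1 b2 b3 b4
      simp [Prod.dist_eq]
    have hdec : ∀ n, HAux Ss Vs Is1 Is2 S V₁ I₁ I₂ (seq n + Δ) ≤
        HAux Ss Vs Is1 Is2 S V₁ I₁ I₂ (seq n) - ε * Δ := by
      intro n
      have h1 : seq n ≤ seq n + Δ := by linarith
      have key := aux_decay (ε := ε) h1 (fun s hs => hHd s ((hseqnn n).trans hs.1)) ?_
      · calc HAux Ss Vs Is1 Is2 S V₁ I₁ I₂ (seq n + Δ)
            ≤ HAux Ss Vs Is1 Is2 S V₁ I₁ I₂ (seq n) - ε * (seq n + Δ - seq n) := key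
          _ = HAux Ss Vs Is1 Is2 S V₁ I₁ I₂ (seq n) - ε * Δ := by ring_nf
      · intro s hs
        have hs0 : 0 ≤ s := (hseqnn n).trans hs.1
        have hds : dist ((S s, V₁ s, I₁ s, I₂ s) : ℝ × ℝ × ℝ × ℝ) (p1, p2, p3, p4) < ρ₀ := by
          have hn0 : 0 ≤ seq n := hseqnn n
          have hsn : s - seq n ≤ Δ := by have := hs.2; linarith
          have hsn0 : 0 ≤ s - seq n := by have := hs.1; linarith
          have lS := hLip S _ hS' hspS (seq n) hn0 s hs0
          have lV := hLip V₁ _ hV' hspV (seq n) hn0 s hs0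
          have l1 := hLip I₁ _ hI₁' hsp1 (seq n) hn0 s hs0
          have l2 := hLip I₂ _ hI₂' hsp2 (seq n) hn0 s hs0
          rw [abs_of_nonneg hsn0] at lS lV l1 l2
          have hCmΔ : Cm * (s - seq n) ≤ ρ₀ / 4 := by
            have hmul := mul_le_mul_of_nonneg_left hsn hCm0.le
            calc Cm * (s - seq n) ≤ Cm * Δ := hmul
              _ = ρ₀ / 4 := by rw [hΔdef]; field_simp
          have hclose := hseqclose n
          rw [hdistlem] at hclose ⊢
          have c1 := (le_max_left _ _).trans_lt hclose
          have c2 := ((le_max_left _ _).trans (le_max_right _ _)).trans_lt hclose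
          have c3 := (((le_max_left _ _).trans (le_max_right _ _)).trans
            (le_max_right _ _)).trans_lt hclose
          have c4 := (((le_max_right _ _).trans (le_max_right _ _)).trans
            (le_max_right _ _)).trans_lt hclose
          simp only [Real.dist_eq] at c1 c2 c3 c4 ⊢
          have t1 : |S s - p1| < ρ₀ := by
            calc |S s - p1| ≤ |S s - S (seq n)| + |S (seq n) - p1| :=
                abs_sub_le _ _ _
              _ < ρ₀ / 4 + ρ₀ / 4 := add_lt_add_of_le_of_lt (lS.trans hCmΔ) c1
              _ ≤ ρ₀ := by linarith
          have t2 : |V₁ s - p2| < ρ₀ := by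
            calc |V₁ s - p2| ≤ |V₁ s - V₁ (seq n)| + |V₁ (seq n) - p2| :=
                abs_sub_le _ _ _
              _ < ρ₀ / 4 + ρ₀ / 4 := add_lt_add_of_le_of_lt (lV.trans hCmΔ) c2
              _ ≤ ρ₀ := by linarith
          have t3 : |I₁ s - p3| < ρ₀ := by
            calc |I₁ s - p3| ≤ |I₁ s - I₁ (seq n)| + |I₁ (seq n) - p3| :=
                abs_sub_le _ _ _
              _ < ρ₀ / 4 + ρ₀ / 4 := add_lt_add_of_le_of_lt (l1.trans hCmΔ) c3
              _ ≤ ρ₀ := by linarith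
          have t4 : |I₂ s - p4| < ρ₀ := by
            calc |I₂ s - p4| ≤ |I₂ s - I₂ (seq n)| + |I₂ (seq n) - p4| :=
                abs_sub_le _ _ _
              _ < ρ₀ / 4 + ρ₀ / 4 := add_lt_add_of_le_of_lt (l2.trans hCmΔ) c4
              _ ≤ ρ₀ := by linarith
          exact max_lt t1 (max_lt t2 (max_lt t3 t4))
        exact le_of_lt (hρ₀ hds)
    have hdec0 : ∀ a b : ℝ, 0 ≤ a → a ≤ b → HAux Ss Vs Is1 Is2 S V₁ I₁ I₂ b ≤
        HAux Ss Vs Is1 Is2 S V₁ I₁ I₂ a := by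
      intro a b ha hab
      have := aux_decay (ε := 0) hab (fun s hs => hHd s (ha.trans hs.1))
        (fun s hs => by simpa using hPhile s (ha.trans hs.1))
      simpa using this
    have hiter : ∀ n : ℕ, HAux Ss Vs Is1 Is2 S V₁ I₁ I₂ (seq n) ≤
        HAux Ss Vs Is1 Is2 S V₁ I₁ I₂ (seq 0) - n * (ε * Δ) := by
      intro n
      induction n with
      | zero => simp
      | succ m ih =>
        have h1 := hdec m
        have h2 := hdec0 (seq m + Δ) (seq (m + 1)) (by linarith [hseqnn m]) (hseqstep m)
        push_cast
        push_cast at ih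
        linarith
    have hHlb : ∀ t, 0 ≤ t → (Ss - Ss * Real.log Ss) + (Vs - Vs * Real.log Vs) +
        (Is1 - Is1 * Real.log Is1) + (Is2 - Is2 * Real.log Is2) ≤
        HAux Ss Vs Is1 Is2 S V₁ I₁ I₂ t := by
      intro t ht
      have h1 := aux_log_lower hSs (hSpos t ht)
      have h2 := aux_log_lower hVs (hVpos t ht)
      have h3 := aux_log_lower hIs1 (hI1pos t ht)
      have h4 := aux_log_lower hIs2 (hI2pos t ht)
      show _ ≤ (S t - Ss * Real.log (S t)) + (V₁ t - Vs * Real.log (V₁ t)) +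
        (I₁ t - Is1 * Real.log (I₁ t)) + (I₂ t - Is2 * Real.log (I₂ t))
      linarith
    obtain ⟨n, hn⟩ := exists_nat_gt ((HAux Ss Vs Is1 Is2 S V₁ I₁ I₂ (seq 0) -
      ((Ss - Ss * Real.log Ss) + (Vs - Vs * Real.log Vs) +
        (Is1 - Is1 * Real.log Is1) + (Is2 - Is2 * Real.log Is2))) / (ε * Δ))
    have hεΔ : 0 < ε * Δ := mul_pos hε0 hΔ0
    have hfinal1 := hiter n
    have hfinal2 := hHlb (seq n) (hseqnn n)
    rw [div_lt_iff₀ hεΔ] at hn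
    linarith
  refine ⟨?_, ?_, ?_, ?_⟩
  · exact (continuous_fst.tendsto ((Ss, Vs, Is1, Is2) : ℝ × ℝ × ℝ × ℝ)).comp hmain
  · exact ((continuous_fst.comp continuous_snd).tendsto
      ((Ss, Vs, Is1, Is2) : ℝ × ℝ × ℝ × ℝ)).comp hmain
  · exact ((continuous_fst.comp (continuous_snd.comp continuous_snd)).tendsto
      ((Ss, Vs, Is1, Is2) : ℝ × ℝ × ℝ × ℝ)).comp hmain
  · exact ((continuous_snd.comp (continuous_snd.comp continuous_snd)).tendsto
      ((Ss, Vs, Is1, Is2) : ℝ × ℝ × ℝ × ℝ)).comp hmain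
end

section
/- Let (S̄, V̄₁, Ī₁) be a single-strain-1 equilibrium and (S̃, Ṽ₁, Ĩ₂) a single-strain-2 equilibrium of system (3), and set R̄₂ = ((∂F₂/∂I)(S̄, 0) + kV̄₁)/α₂ and R̃₁ = (∂F₁/∂I)(S̃, 0)/α₁. If R̄₂ > 1 and R̃₁ > 1, then system (3) admits an endemic equilibrium: there exist S* > 0, V₁* > 0, I₁* > 0, I₂* > 0 with Λ − F₁(S*, I₁*) − F₂(S*, I₂*) − λS* = 0, rS* − (μ + kI₂*)V₁* = 0, F₁(S*, I₁*) − α₁I₁* = 0 and F₂(S*, I₂*) + kI₂*V₁* − α₂I₂* = 0. -/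
open Set

private lemma myStrictMonoOn {φ φ' : ℝ → ℝ} (h : ∀ x, 0 ≤ x → HasDerivAt φ (φ' x) x)
    (hp : ∀ x, 0 ≤ x → 0 < φ' x) : StrictMonoOn φ (Set.Ici 0) := by
  apply strictMonoOn_of_deriv_pos (convex_Ici 0)
  · exact fun x hx => (h x hx).continuousAt.continuousWithinAt
  · intro x hx
    rw [interior_Ici] at hx
    rw [(h x hx.le).deriv]
    exact hp x hx.le

private lemma myAntitoneOn {φ φ' : ℝ → ℝ} (h : ∀ x, 0 ≤ x → HasDerivAt φ (φ' x) x)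
    (hp : ∀ x, 0 ≤ x → φ' x ≤ 0) : AntitoneOn φ (Set.Ici 0) := by
  apply antitoneOn_of_deriv_nonpos (convex_Ici 0)
  · exact fun x hx => (h x hx).continuousAt.continuousWithinAt
  · intro x hx
    rw [interior_Ici] at hx
    exact (h x hx.le).differentiableAt.differentiableWithinAt
  · intro x hx
    rw [interior_Ici] at hx
    rw [(h x hx.le).deriv]
    exact hp x hx.le

/-- Key two-point inequality: along the strain-2 nullcline, `F₂ + (r+μ)S` is
strictly increasing. -/
private lemma key_ineq {μ r k α₂ : ℝ} (hμ : 0 < μ) (hr : 0 < r) (hk : 0 < k) (hα₂ : 0 < α₂)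
    {S₁ I₁ S₂ I₂ a₁ a₂ : ℝ} (hS₁ : 0 < S₁) (hS : S₁ < S₂) (hI₁ : 0 < I₁) (hI : I₁ ≤ I₂)
    (ha₂ : 0 ≤ a₂)
    (he₁ : a₁ + k * r * S₁ / (μ + k * I₁) = α₂)
    (he₂ : a₂ + k * r * S₂ / (μ + k * I₂) = α₂) :
    I₁ * a₁ + (r + μ) * S₁ < I₂ * a₂ + (r + μ) * S₂ := by
  have hI₂ : 0 < I₂ := lt_of_lt_of_le hI₁ hI
  have d₁ : 0 < μ + k * I₁ := by positivity
  have d₂ : 0 < μ + k * I₂ := by positivity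
  have e₂ : k * r * S₂ = (α₂ - a₂) * (μ + k * I₂) := by
    field_simp at he₂; linarith
  have h₁ : a₁ = α₂ - k * r * S₁ / (μ + k * I₁) := by linarith
  have h₂ : a₂ = α₂ - k * r * S₂ / (μ + k * I₂) := by linarith
  have hP1 : 0 ≤ (I₂ - I₁) * (α₂ * (μ + k * I₂) - k * r * S₂) := by
    have hx : α₂ * (μ + k * I₂) - k * r * S₂ = a₂ * (μ + k * I₂) := by linarith [e₂]
    rw [hx]
    exact mul_nonneg (by linarith) (mul_nonneg ha₂ d₂.le)
  have hsum : I₂ * a₂ + (r + μ) * S₂ - (I₁ * a₁ + (r + μ) * S₁)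
      = (μ * (S₂ - S₁) * ((μ + k * I₁) * (μ + k * I₂)) + μ * r * (μ + k * I₂) * (S₂ - S₁)
        + μ * ((I₂ - I₁) * (α₂ * (μ + k * I₂) - k * r * S₂))
        + α₂ * (I₂ - I₁) * (μ + k * I₂) * (k * I₁)) / ((μ + k * I₁) * (μ + k * I₂)) := by
    rw [h₁, h₂]
    field_simp
    ring
  have hpos : 0 < μ * (S₂ - S₁) * ((μ + k * I₁) * (μ + k * I₂)) + μ * r * (μ + k * I₂) * (S₂ - S₁)
        + μ * ((I₂ - I₁) * (α₂ * (μ + k * I₂) - k * r * S₂))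
        + α₂ * (I₂ - I₁) * (μ + k * I₂) * (k * I₁) := by
    have t1 : 0 < μ * (S₂ - S₁) * ((μ + k * I₁) * (μ + k * I₂)) :=
      mul_pos (mul_pos hμ (by linarith)) (mul_pos d₁ d₂)
    have t2 : 0 ≤ μ * r * (μ + k * I₂) * (S₂ - S₁) :=
      mul_nonneg (mul_nonneg (mul_nonneg hμ.le hr.le) d₂.le) (by linarith)
    have t3 : 0 ≤ μ * ((I₂ - I₁) * (α₂ * (μ + k * I₂) - k * r * S₂)) :=
      mul_nonneg hμ.le hP1
    have t4 : 0 ≤ α₂ * (I₂ - I₁) * (μ + k * I₂) * (k * I₁) := by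
      have : 0 ≤ I₂ - I₁ := by linarith
      positivity
    linarith
  have := div_pos hpos (mul_pos d₁ d₂)
  linarith [hsum ▸ this]

set_option maxHeartbeats 2000000 in
/-- Theorem 5.12: if R̄₂ > 1 and R̃₁ > 1, system (3) admits an endemic
equilibrium with all four components positive. -/
theorem endemic_equilibrium_exists
    (Λ r μ k α₁ α₂ lam : ℝ)
    (hΛ : 0 < Λ) (hr : 0 < r) (hμ : 0 < μ) (hk : 0 < k)
    (hα₁ : μ < α₁) (hα₂ : μ < α₂) (hlam : lam = r + μ)
    (F₁ F₂ f₁ f₂ F₁S F₁I F₂S F₂I f₁S f₁I f₂S f₂I : ℝ → ℝ → ℝ)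
    (hF₁nn : ∀ S I : ℝ, 0 ≤ S → 0 ≤ I → 0 ≤ F₁ S I)
    (hF₂nn : ∀ S I : ℝ, 0 ≤ S → 0 ≤ I → 0 ≤ F₂ S I)
    (hF₁C1 : ContDiffOn ℝ 1 (fun p : ℝ × ℝ => F₁ p.1 p.2) {p : ℝ × ℝ | 0 ≤ p.1 ∧ 0 ≤ p.2})
    (hF₂C1 : ContDiffOn ℝ 1 (fun p : ℝ × ℝ => F₂ p.1 p.2) {p : ℝ × ℝ | 0 ≤ p.1 ∧ 0 ≤ p.2})
    (hf₁C1 : ContDiffOn ℝ 1 (fun p : ℝ × ℝ => f₁ p.1 p.2) {p : ℝ × ℝ | 0 ≤ p.1 ∧ 0 ≤ p.2})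
    (hf₂C1 : ContDiffOn ℝ 1 (fun p : ℝ × ℝ => f₂ p.1 p.2) {p : ℝ × ℝ | 0 ≤ p.1 ∧ 0 ≤ p.2})
    (hH1₁ : ∀ S I : ℝ, F₁ S I = I * f₁ S I)
    (hH1₂ : ∀ S I : ℝ, F₂ S I = I * f₂ S I)
    (hF₁zero : ∀ S I : ℝ, 0 ≤ S → 0 ≤ I → F₁ 0 I = 0 ∧ F₁ S 0 = 0)
    (hF₂zero : ∀ S I : ℝ, 0 ≤ S → 0 ≤ I → F₂ 0 I = 0 ∧ F₂ S 0 = 0)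
    (hdF₁S : ∀ S I : ℝ, 0 ≤ S → 0 ≤ I → HasDerivAt (fun x => F₁ x I) (F₁S S I) S)
    (hdF₁I : ∀ S I : ℝ, 0 ≤ S → 0 ≤ I → HasDerivAt (fun y => F₁ S y) (F₁I S I) I)
    (hdF₂S : ∀ S I : ℝ, 0 ≤ S → 0 ≤ I → HasDerivAt (fun x => F₂ x I) (F₂S S I) S)
    (hdF₂I : ∀ S I : ℝ, 0 ≤ S → 0 ≤ I → HasDerivAt (fun y => F₂ S y) (F₂I S I) I)
    (hdf₁S : ∀ S I : ℝ, 0 ≤ S → 0 ≤ I → HasDerivAt (fun x => f₁ x I) (f₁S S I) S)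
    (hdf₁I : ∀ S I : ℝ, 0 ≤ S → 0 ≤ I → HasDerivAt (fun y => f₁ S y) (f₁I S I) I)
    (hdf₂S : ∀ S I : ℝ, 0 ≤ S → 0 ≤ I → HasDerivAt (fun x => f₂ x I) (f₂S S I) S)
    (hdf₂I : ∀ S I : ℝ, 0 ≤ S → 0 ≤ I → HasDerivAt (fun y => f₂ S y) (f₂I S I) I)
    (hH2f₁S : ∀ S I : ℝ, 0 ≤ S → 0 ≤ I → 0 < f₁S S I)
    (hH2f₁I : ∀ S I : ℝ, 0 ≤ S → 0 ≤ I → f₁I S I ≤ 0)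
    (hH2f₂S : ∀ S I : ℝ, 0 ≤ S → 0 ≤ I → 0 < f₂S S I)
    (hH2f₂I : ∀ S I : ℝ, 0 ≤ S → 0 ≤ I → f₂I S I ≤ 0)
    (Sb Vb Ib : ℝ) (hSb : 0 < Sb) (hVb : 0 < Vb) (hIb : 0 < Ib)
    (hbeq1 : Λ - F₁ Sb Ib - lam * Sb = 0)
    (hbeq2 : r * Sb - μ * Vb = 0)
    (hbeq3 : F₁ Sb Ib - α₁ * Ib = 0)
    (St Vt It : ℝ) (hSt : 0 < St) (hVt : 0 < Vt) (hIt : 0 < It)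
    (hteq1 : Λ - F₂ St It - lam * St = 0)
    (hteq2 : r * St - (μ + k * It) * Vt = 0)
    (hteq3 : F₂ St It + k * It * Vt - α₂ * It = 0)
    (hRb₂ : 1 < (F₂I Sb 0 + k * Vb) / α₂)
    (hRt₁ : 1 < F₁I St 0 / α₁) :
    ∃ Ss Vs Is1 Is2 : ℝ, 0 < Ss ∧ 0 < Vs ∧ 0 < Is1 ∧ 0 < Is2 ∧
      Λ - F₁ Ss Is1 - F₂ Ss Is2 - lam * Ss = 0 ∧
      r * Ss - (μ + k * Is2) * Vs = 0 ∧
      F₁ Ss Is1 - α₁ * Is1 = 0 ∧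
      F₂ Ss Is2 + k * Is2 * Vs - α₂ * Is2 = 0 := by
  have hα₁pos : 0 < α₁ := hμ.trans hα₁
  have hα₂pos : 0 < α₂ := hμ.trans hα₂
  have hlampos : 0 < lam := by rw [hlam]; positivity
  -- derivative identities at I = 0
  have hderiv2 : ∀ S : ℝ, 0 ≤ S → F₂I S 0 = f₂ S 0 := by
    intro S hS
    have h := (hasDerivAt_id (0:ℝ)).mul (hdf₂I S 0 hS le_rfl)
    simp only [id_eq, one_mul, zero_mul, add_zero] at h
    have heq : (fun y : ℝ => y * f₂ S y) = fun y => F₂ S y :=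
      funext fun y => (hH1₂ S y).symm
    rw [show (id * fun y => f₂ S y) = fun y : ℝ => y * f₂ S y from rfl, heq] at h
    exact (hdF₂I S 0 hS le_rfl).unique h
  have hderiv1 : ∀ S : ℝ, 0 ≤ S → F₁I S 0 = f₁ S 0 := by
    intro S hS
    have h := (hasDerivAt_id (0:ℝ)).mul (hdf₁I S 0 hS le_rfl)
    simp only [id_eq, one_mul, zero_mul, add_zero] at h
    have heq : (fun y : ℝ => y * f₁ S y) = fun y => F₁ S y :=
      funext fun y => (hH1₁ S y).symm
    rw [show (id * fun y => f₁ S y) = fun y : ℝ => y * f₁ S y from rfl, heq] at h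
    exact (hdF₁I S 0 hS le_rfl).unique h
  -- threshold conditions
  have hRb₂' : α₂ < f₂ Sb 0 + k * (r * Sb / μ) := by
    have h := (one_lt_div hα₂pos).mp hRb₂
    have hVb' : Vb = r * Sb / μ := by
      rw [eq_div_iff hμ.ne']; linarith
    rw [hderiv2 Sb hSb.le, hVb'] at h
    exact h
  have hRt₁' : α₁ < f₁ St 0 := by
    have h := (one_lt_div hα₁pos).mp hRt₁
    rwa [hderiv1 St hSt.le] at h
  -- strain-1 equilibrium facts
  have hf₁b : f₁ Sb Ib = α₁ := by
    have h := hbeq3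
    rw [hH1₁ Sb Ib] at h
    have h2 : Ib * f₁ Sb Ib = Ib * α₁ := by linarith
    exact mul_left_cancel₀ hIb.ne' h2
  have hIbval : α₁ * Ib = Λ - lam * Sb := by
    have h1 := hbeq1
    rw [hH1₁ Sb Ib, hf₁b] at h1
    linarith
  -- strain-2 equilibrium facts
  have hdIt : 0 < μ + k * It := by positivity
  have hVt' : Vt = r * St / (μ + k * It) := by
    rw [eq_div_iff hdIt.ne']; linarith
  have hf₂t : f₂ St It + k * r * St / (μ + k * It) = α₂ := by
    have h := hteq3
    rw [hH1₂ St It, hVt'] at h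
    field_simp at h ⊢
    have h3 : It * (f₂ St It * (μ + k * It) + k * r * St) = It * (α₂ * (μ + k * It)) := by
      linear_combination h
    have h4 := mul_left_cancel₀ hIt.ne' h3
    linarith
  -- monotonicity packages
  have mono1 : ∀ I : ℝ, 0 ≤ I → StrictMonoOn (fun S => f₁ S I) (Set.Ici 0) :=
    fun I hI => myStrictMonoOn (fun x hx => hdf₁S x I hx hI) (fun x hx => hH2f₁S x I hx hI)
  have anti1 : ∀ S : ℝ, 0 ≤ S → AntitoneOn (fun I => f₁ S I) (Set.Ici 0) :=
    fun S hS => myAntitoneOn (fun x hx => hdf₁I S x hS hx) (fun x hx => hH2f₁I S x hS hx)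
  have mono2 : ∀ I : ℝ, 0 ≤ I → StrictMonoOn (fun S => f₂ S I) (Set.Ici 0) :=
    fun I hI => myStrictMonoOn (fun x hx => hdf₂S x I hx hI) (fun x hx => hH2f₂S x I hx hI)
  have anti2 : ∀ S : ℝ, 0 ≤ S → AntitoneOn (fun I => f₂ S I) (Set.Ici 0) :=
    fun S hS => myAntitoneOn (fun x hx => hdf₂I S x hS hx) (fun x hx => hH2f₂I S x hS hx)
  have hf₂nn : ∀ S I : ℝ, 0 ≤ S → 0 ≤ I → 0 ≤ f₂ S I := by
    intro S I hS hI
    have h0 : 0 ≤ F₂ S (I+1) := hF₂nn S (I+1) hS (by linarith)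
    rw [hH1₂ S (I+1)] at h0
    have h1 : 0 ≤ f₂ S (I+1) := by nlinarith
    have h2 : f₂ S (I+1) ≤ f₂ S I :=
      anti2 S hS (mem_Ici.mpr hI) (mem_Ici.mpr (by linarith)) (by linarith)
    linarith
  have hf₂0 : ∀ I : ℝ, 0 < I → f₂ 0 I = 0 := by
    intro I hI
    have h := (hF₂zero 0 I le_rfl hI.le).1
    rw [hH1₂ 0 I] at h
    rcases mul_eq_zero.mp h with h' | h'
    · exact absurd h' hI.ne'
    · exact h'
  have hf₁0 : ∀ I : ℝ, 0 < I → f₁ 0 I = 0 := by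
    intro I hI
    have h := (hF₁zero 0 I le_rfl hI.le).1
    rw [hH1₁ 0 I] at h
    rcases mul_eq_zero.mp h with h' | h'
    · exact absurd h' hI.ne'
    · exact h'
  -- the invasion function g of strain 2
  obtain ⟨g, hg_def⟩ : ∃ g' : ℝ → ℝ → ℝ, g' = fun S I => f₂ S I + k * r * S / (μ + k * I) - α₂ :=
    ⟨_, rfl⟩
  have hg_app : ∀ S I : ℝ, g S I = f₂ S I + k * r * S / (μ + k * I) - α₂ := by
    intro S I; rw [hg_def]
  have hden : ∀ I : ℝ, 0 ≤ I → 0 < μ + k * I := fun I hI => by positivity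
  have hgcontI : ∀ S I₀ : ℝ, 0 ≤ S → 0 ≤ I₀ → ContinuousAt (fun I => g S I) I₀ := by
    intro S I₀ hS hI₀
    simp only [hg_def]
    apply ContinuousAt.sub _ continuousAt_const
    apply ContinuousAt.add (hdf₂I S I₀ hS hI₀).continuousAt
    exact continuousAt_const.div
      (continuousAt_const.add (continuousAt_const.mul continuousAt_id)) (hden I₀ hI₀).ne'
  have hgcontS : ∀ S₀ I : ℝ, 0 ≤ S₀ → 0 ≤ I → ContinuousAt (fun S => g S I) S₀ := by
    intro S₀ I hS₀ hI
    simp only [hg_def]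
    apply ContinuousAt.sub _ continuousAt_const
    apply ContinuousAt.add (hdf₂S S₀ I hS₀ hI).continuousAt
    exact ((continuousAt_const.mul continuousAt_id).div_const _)
  have hganti : ∀ S : ℝ, 0 ≤ S → ∀ I₁ I₂ : ℝ, 0 ≤ I₁ → I₁ ≤ I₂ → g S I₂ ≤ g S I₁ := by
    intro S hS I₁ I₂ hI₁ hIle
    have h1 : f₂ S I₂ ≤ f₂ S I₁ :=
      anti2 S hS (mem_Ici.mpr hI₁) (mem_Ici.mpr (by linarith)) hIle
    have h2 : k * r * S / (μ + k * I₂) ≤ k * r * S / (μ + k * I₁) :=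
      div_le_div_of_nonneg_left (by positivity) (hden I₁ hI₁) (by nlinarith)
    rw [hg_app, hg_app]
    linarith
  have hgstrictI : ∀ S : ℝ, 0 < S → ∀ I₁ I₂ : ℝ, 0 ≤ I₁ → I₁ < I₂ → g S I₂ < g S I₁ := by
    intro S hS I₁ I₂ hI₁ hIlt
    have h1 : f₂ S I₂ ≤ f₂ S I₁ :=
      anti2 S hS.le (mem_Ici.mpr hI₁) (mem_Ici.mpr (by linarith)) hIlt.le
    have h2 : k * r * S / (μ + k * I₂) < k * r * S / (μ + k * I₁) :=
      div_lt_div_of_pos_left (by positivity) (hden I₁ hI₁) (by nlinarith)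
    rw [hg_app, hg_app]
    linarith
  have hgmonoS : ∀ I : ℝ, 0 ≤ I → ∀ S₁ S₂ : ℝ, 0 ≤ S₁ → S₁ ≤ S₂ → g S₁ I ≤ g S₂ I := by
    intro I hI S₁ S₂ hS₁ hSle
    have h1 : f₂ S₁ I ≤ f₂ S₂ I := by
      rcases eq_or_lt_of_le hSle with h | h
      · rw [h]
      · exact (mono2 I hI (mem_Ici.mpr hS₁) (mem_Ici.mpr (by linarith)) h).le
    have h2 : k * r * S₁ / (μ + k * I) ≤ k * r * S₂ / (μ + k * I) :=
      (div_le_div_iff_of_pos_right (hden I hI)).mpr (mul_le_mul_of_nonneg_left hSle (by positivity))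
    rw [hg_app, hg_app]
    linarith
  have hgt0 : g St It = 0 := by
    rw [hg_app]; linarith
  have hgb0 : 0 < g Sb 0 := by
    rw [hg_app]
    have he : k * r * Sb / (μ + k * 0) = k * (r * Sb / μ) := by
      rw [mul_zero, add_zero]; ring
    rw [he]
    linarith
  have hg0I : ∀ I : ℝ, 0 < I → g 0 I = -α₂ := by
    intro I hI
    rw [hg_app, hf₂0 I hI, mul_zero, zero_div]
    norm_num
  -- the root function i2 of g in the I₂ direction
  obtain ⟨A, hA_def⟩ : ∃ A' : ℝ → Set ℝ, A' = fun S => {I : ℝ | I ∈ Set.Icc 0 It ∧ 0 ≤ g S I} :=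
    ⟨_, rfl⟩
  have hA_mem : ∀ S I : ℝ, I ∈ A S ↔ (I ∈ Set.Icc 0 It ∧ 0 ≤ g S I) := by
    intro S I; rw [hA_def]; rfl
  obtain ⟨i2, hi2_def⟩ : ∃ i2' : ℝ → ℝ, i2' = fun S => sSup (A S) := ⟨_, rfl⟩
  have hi2_app : ∀ S : ℝ, i2 S = sSup (A S) := by intro S; rw [hi2_def]
  have hAbdd : ∀ S : ℝ, BddAbove (A S) :=
    fun S => ⟨It, fun x hx => ((hA_mem S x).mp hx).1.2⟩
  have hi2nonneg : ∀ S : ℝ, 0 ≤ i2 S := by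
    intro S; rw [hi2_app]
    exact Real.sSup_nonneg (fun x hx => ((hA_mem S x).mp hx).1.1)
  have hi2le : ∀ S : ℝ, i2 S ≤ It := by
    intro S; rw [hi2_app]
    exact Real.sSup_le (fun x hx => ((hA_mem S x).mp hx).1.2) hIt.le
  have hi2empty : ∀ S : ℝ, ¬(A S).Nonempty → i2 S = 0 := by
    intro S h
    rw [Set.not_nonempty_iff_eq_empty] at h
    rw [hi2_app, h, Real.sSup_empty]
  have hle_i2 : ∀ S x : ℝ, x ∈ A S → x ≤ i2 S := by
    intro S x hx; rw [hi2_app]; exact le_csSup (hAbdd S) hx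
  have hsup_le : ∀ S b : ℝ, (∀ x ∈ A S, x ≤ b) → (0:ℝ) ≤ b → i2 S ≤ b := by
    intro S b h hb; rw [hi2_app]; exact Real.sSup_le h hb
  have hsup_le' : ∀ S b : ℝ, (A S).Nonempty → (∀ x ∈ A S, x ≤ b) → i2 S ≤ b := by
    intro S b hne h; rw [hi2_app]; exact csSup_le hne h
  -- g S (i2 S) ≤ 0 on [0, St]
  have hgle : ∀ S : ℝ, 0 ≤ S → S ≤ St → g S (i2 S) ≤ 0 := by
    intro S hS hSle
    by_cases hne : (A S).Nonempty
    · by_cases hlt : i2 S < It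
      · by_contra hpos
        push_neg at hpos
        obtain ⟨δ, hδ, hball⟩ :=
          Metric.continuousAt_iff.mp (hgcontI S (i2 S) hS (hi2nonneg S)) (g S (i2 S)) hpos
        set I' := min It (i2 S + δ/2) with hI'_def
        have hI'gt : i2 S < I' := lt_min hlt (by linarith)
        have hI'dist : dist I' (i2 S) < δ := by
          rw [Real.dist_eq, abs_of_pos (by linarith)]
          have := min_le_right It (i2 S + δ/2)
          linarith
        have hgI' : 0 < g S I' := by
          have h := hball hI'dist
          rw [Real.dist_eq] at h
          have := (abs_lt.mp h).1
          linarith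
        have hI'mem : I' ∈ A S :=
          (hA_mem S I').mpr ⟨⟨le_trans (hi2nonneg S) hI'gt.le, min_le_left _ _⟩, hgI'.le⟩
        have := hle_i2 S I' hI'mem
        linarith
      · have heq : i2 S = It := le_antisymm (hi2le S) (not_lt.mp hlt)
        rw [heq]
        calc g S It ≤ g St It := hgmonoS It hIt.le S St hS hSle
        _ = 0 := hgt0
    · rw [hi2empty S hne]
      by_contra h
      push_neg at h
      exact hne ⟨0, (hA_mem S 0).mpr ⟨⟨le_rfl, hIt.le⟩, h.le⟩⟩
  have hgge : ∀ S : ℝ, 0 ≤ S → (A S).Nonempty → 0 ≤ g S (i2 S) := by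
    intro S hS hne
    by_contra h
    push_neg at h
    obtain ⟨δ, hδ, hball⟩ :=
      Metric.continuousAt_iff.mp (hgcontI S (i2 S) hS (hi2nonneg S)) (-(g S (i2 S))) (by linarith)
    have hub : ∀ x ∈ A S, x ≤ i2 S - δ := by
      intro x hx
      by_contra hxgt
      push_neg at hxgt
      have hxle : x ≤ i2 S := hle_i2 S x hx
      have hdist : dist x (i2 S) < δ := by
        rw [Real.dist_eq, abs_lt]; constructor <;> linarith
      have h2 := hball hdist
      rw [Real.dist_eq] at h2
      have := (abs_lt.mp h2).2
      have : g S x < 0 := by linarith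
      linarith [((hA_mem S x).mp hx).2]
    have := hsup_le' S _ hne hub
    linarith
  have hgroot : ∀ S : ℝ, 0 ≤ S → S ≤ St → 0 < i2 S → g S (i2 S) = 0 := by
    intro S hS hSle hpos
    have hne : (A S).Nonempty := by
      by_contra h
      rw [hi2empty S h] at hpos
      exact lt_irrefl 0 hpos
    exact le_antisymm (hgle S hS hSle) (hgge S hS hne)
  have hi2_0 : i2 0 = 0 := by
    refine le_antisymm (hsup_le 0 0 ?_ le_rfl) (hi2nonneg 0)
    intro x hx
    by_contra hx0
    push_neg at hx0
    have h2 := ((hA_mem 0 x).mp hx).2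
    rw [hg0I x hx0] at h2
    linarith
  have hi2_St : i2 St = It := by
    refine le_antisymm (hi2le St) ?_
    exact hle_i2 St It ((hA_mem St It).mpr ⟨⟨hIt.le, le_rfl⟩, le_of_eq hgt0.symm⟩)
  -- continuity of i2 on [0, St]
  have hi2cont : ContinuousOn i2 (Set.Icc 0 St) := by
    intro S₀ hS₀
    rw [Metric.continuousWithinAt_iff]
    intro ε hε
    have hup : g S₀ (i2 S₀ + ε/2) < 0 := by
      rcases eq_or_lt_of_le hS₀.1 with h0 | hpos
      · rw [← h0, hi2_0, hg0I (0 + ε/2) (by linarith)]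
        linarith
      · have h1 := hgstrictI S₀ hpos (i2 S₀) (i2 S₀ + ε/2) (hi2nonneg S₀) (by linarith)
        have h2 := hgle S₀ hS₀.1 hS₀.2
        linarith
    obtain ⟨δ₁, hδ₁, hb₁⟩ :=
      Metric.continuousAt_iff.mp
        (hgcontS S₀ (i2 S₀ + ε/2) hS₀.1 (by linarith [hi2nonneg S₀]))
        (-(g S₀ (i2 S₀ + ε/2))) (by linarith)
    have hub : ∀ S ∈ Set.Icc (0:ℝ) St, dist S S₀ < δ₁ → i2 S ≤ i2 S₀ + ε/2 := by
      intro S hS hdist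
      have hgS : g S (i2 S₀ + ε/2) < 0 := by
        have h2 := hb₁ hdist
        rw [Real.dist_eq] at h2
        have := (abs_lt.mp h2).2
        linarith
      apply hsup_le S _ _ (by linarith [hi2nonneg S₀])
      intro x hx
      by_contra hxgt
      push_neg at hxgt
      have hmono : g S x ≤ g S (i2 S₀ + ε/2) :=
        hganti S hS.1 _ x (by linarith [hi2nonneg S₀]) hxgt.le
      linarith [((hA_mem S x).mp hx).2]
    rcases le_or_gt (i2 S₀) (ε/2) with hsmall | hbig
    · refine ⟨δ₁, hδ₁, fun S hS hdist => ?_⟩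
      have h1 := hub S hS hdist
      rw [Real.dist_eq, abs_lt]
      constructor <;> [skip; skip] <;> linarith [hi2nonneg S]
    · have hS₀pos : 0 < S₀ := by
        rcases eq_or_lt_of_le hS₀.1 with h0 | h
        · exfalso; rw [← h0, hi2_0] at hbig; linarith
        · exact h
      have hroot := hgroot S₀ hS₀.1 hS₀.2 (by linarith)
      have hlow : 0 < g S₀ (i2 S₀ - ε/2) := by
        have := hgstrictI S₀ hS₀pos (i2 S₀ - ε/2) (i2 S₀) (by linarith) (by linarith)
        linarith
      obtain ⟨δ₂, hδ₂, hb₂⟩ :=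
        Metric.continuousAt_iff.mp
          (hgcontS S₀ (i2 S₀ - ε/2) hS₀.1 (by linarith)) (g S₀ (i2 S₀ - ε/2)) hlow
      refine ⟨min δ₁ δ₂, lt_min hδ₁ hδ₂, fun S hS hdist => ?_⟩
      have hd1 : dist S S₀ < δ₁ := lt_of_lt_of_le hdist (min_le_left _ _)
      have hd2 : dist S S₀ < δ₂ := lt_of_lt_of_le hdist (min_le_right _ _)
      have h1 := hub S hS hd1
      have hlb : i2 S₀ - ε/2 ≤ i2 S := by
        apply hle_i2 S
        refine (hA_mem S _).mpr ⟨⟨by linarith, by linarith [hi2le S₀]⟩, ?_⟩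
        have h2 := hb₂ hd2
        rw [Real.dist_eq] at h2
        have := (abs_lt.mp h2).1
        linarith
      rw [Real.dist_eq, abs_lt]
      constructor <;> linarith
  -- the functions J and Φ
  obtain ⟨Jf, hJ_def⟩ : ∃ J' : ℝ → ℝ, J' = fun S => (Λ - F₂ S (i2 S) - lam * S) / α₁ := ⟨_, rfl⟩
  have hJ_app : ∀ S : ℝ, Jf S = (Λ - F₂ S (i2 S) - lam * S) / α₁ := by intro S; rw [hJ_def]
  obtain ⟨Φ, hΦ_def⟩ : ∃ Φ' : ℝ → ℝ, Φ' = fun S => f₁ S (max (Jf S) 0) - α₁ := ⟨_, rfl⟩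
  have hΦ_app : ∀ S : ℝ, Φ S = f₁ S (max (Jf S) 0) - α₁ := by intro S; rw [hΦ_def]
  have hQpair : Set.MapsTo (fun S => (S, i2 S)) (Set.Icc (0:ℝ) St)
      {p : ℝ × ℝ | 0 ≤ p.1 ∧ 0 ≤ p.2} := fun S hS => ⟨hS.1, hi2nonneg S⟩
  have hF₂comp : ContinuousOn (fun S => F₂ S (i2 S)) (Set.Icc 0 St) := by
    have := (hF₂C1.continuousOn).comp (continuousOn_id.prodMk hi2cont) hQpair
    exact this
  have hJcont : ContinuousOn Jf (Set.Icc 0 St) := by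
    rw [hJ_def]
    exact ((continuousOn_const.sub hF₂comp).sub
      (continuousOn_const.mul continuousOn_id)).div_const α₁
  have hΦcont : ContinuousOn Φ (Set.Icc 0 St) := by
    have hmax : ContinuousOn (fun S => max (Jf S) 0) (Set.Icc 0 St) :=
      fun x hx => ((hJcont x hx).max continuousWithinAt_const)
    have hcomp : ContinuousOn (fun S => f₁ S (max (Jf S) 0)) (Set.Icc 0 St) :=
      (hf₁C1.continuousOn).comp (continuousOn_id.prodMk hmax)
        (fun S hS => ⟨hS.1, le_max_right _ _⟩)
    rw [hΦ_def]
    exact hcomp.sub continuousOn_const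
  -- endpoint values
  have hΦ0 : Φ 0 < 0 := by
    have hJ0 : Jf 0 = Λ / α₁ := by
      rw [hJ_app, hi2_0, (hF₂zero 0 0 le_rfl le_rfl).1, mul_zero, sub_zero, sub_zero]
    have hmax : max (Jf 0) 0 = Λ / α₁ := by
      rw [hJ0]; exact max_eq_left (by positivity)
    have : Φ 0 = f₁ 0 (Λ / α₁) - α₁ := by rw [hΦ_app, hmax]
    rw [this, hf₁0 (Λ / α₁) (by positivity)]
    linarith
  have hΦt : 0 < Φ St := by
    have hJt : Jf St = 0 := by
      rw [hJ_app, hi2_St, hteq1, zero_div]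
    have hmax : max (Jf St) 0 = 0 := by rw [hJt, max_self]
    have : Φ St = f₁ St 0 - α₁ := by rw [hΦ_app, hmax]
    rw [this]
    linarith
  -- S* = sSup of the set where Φ ≤ 0
  obtain ⟨B, hB_def⟩ : ∃ B' : Set ℝ, B' = Set.Icc 0 St ∩ Φ ⁻¹' (Set.Iic 0) := ⟨_, rfl⟩
  have hB_mem : ∀ x : ℝ, x ∈ B ↔ (x ∈ Set.Icc 0 St ∧ Φ x ≤ 0) := by
    intro x; rw [hB_def]; rfl
  have hBne : (0:ℝ) ∈ B := (hB_mem 0).mpr ⟨⟨le_rfl, hSt.le⟩, hΦ0.le⟩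
  have hBbdd : BddAbove B := ⟨St, fun x hx => ((hB_mem x).mp hx).1.2⟩
  have hBclosed : IsClosed B := by
    rw [hB_def]
    exact hΦcont.preimage_isClosed_of_isClosed isClosed_Icc isClosed_Iic
  obtain ⟨Ss, hSs_def⟩ : ∃ s' : ℝ, s' = sSup B := ⟨_, rfl⟩
  have hSsB' : Ss ∈ B := by
    rw [hSs_def]; exact hBclosed.csSup_mem ⟨0, hBne⟩ hBbdd
  have hSsB := (hB_mem Ss).mp hSsB'
  have hle_Ss : ∀ x : ℝ, x ∈ B → x ≤ Ss := by
    intro x hx; rw [hSs_def]; exact le_csSup hBbdd hx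
  have hSs0 : 0 ≤ Ss := hSsB.1.1
  have hSsltSt : Ss < St := by
    rcases eq_or_lt_of_le hSsB.1.2 with h | h
    · exfalso
      have h2 := hSsB.2
      rw [h] at h2
      linarith
    · exact h
  have hΦSs : Φ Ss = 0 := by
    have hle : Φ Ss ≤ 0 := hSsB.2
    rcases eq_or_lt_of_le hle with h | hlt
    · exact h
    · exfalso
      obtain ⟨δ, hδ, hb⟩ :=
        Metric.continuousWithinAt_iff.mp (hΦcont Ss hSsB.1) (-(Φ Ss)) (by linarith)
      set S' := min St (Ss + δ/2) with hS'_def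
      have hS'gt : Ss < S' := lt_min hSsltSt (by linarith)
      have hS'mem : S' ∈ Set.Icc (0:ℝ) St := ⟨le_trans hSs0 hS'gt.le, min_le_left _ _⟩
      have hdist : dist S' Ss < δ := by
        rw [Real.dist_eq, abs_of_pos (by linarith)]
        have := min_le_right St (Ss + δ/2)
        linarith
      have h2 := hb hS'mem hdist
      rw [Real.dist_eq] at h2
      have hΦS' : Φ S' < 0 := by
        have := (abs_lt.mp h2).2
        linarith
      have hmem : S' ∈ B := (hB_mem S').mpr ⟨hS'mem, hΦS'.le⟩
      have := hle_Ss S' hmem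
      linarith
  have hSspos : 0 < Ss := by
    rcases eq_or_lt_of_le hSs0 with h | h
    · exfalso; rw [← h] at hΦSs; linarith
    · exact h
  have hf₁eq : f₁ Ss (max (Jf Ss) 0) = α₁ := by
    have h2 := hΦSs
    rw [hΦ_app] at h2
    linarith
  -- Step A : Jf Ss > 0
  have hJpos : 0 < Jf Ss := by
    by_contra hJle
    push_neg at hJle
    have hmax0 : max (Jf Ss) 0 = 0 := max_eq_right hJle
    have hf₁Ss0 : f₁ Ss 0 = α₁ := by rw [hmax0] at hf₁eq; exact hf₁eq
    have hnum : Λ - F₂ Ss (i2 Ss) - lam * Ss = Jf Ss * α₁ := by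
      rw [hJ_app]
      field_simp
    have hFle : Λ - F₂ Ss (i2 Ss) - lam * Ss ≤ 0 := by
      rw [hnum]
      exact mul_nonpos_iff.mpr (Or.inr ⟨hJle, hα₁pos.le⟩)
    rcases eq_or_lt_of_le (hi2nonneg Ss) with hI20 | hI2pos
    · have hF₂0 : F₂ Ss 0 = 0 := (hF₂zero Ss 0 hSs0 le_rfl).2
      rw [← hI20, hF₂0] at hFle
      have h2 : lam * Ss < lam * St := by
        exact mul_lt_mul_of_pos_left hSsltSt hlampos
      have h3 := hF₂nn St It hSt.le hIt.le
      linarith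
    · have hg0 : g Ss (i2 Ss) = 0 := hgroot Ss hSs0 hSsltSt.le hI2pos
      have ha₂' : f₂ Ss (i2 Ss) + k * r * Ss / (μ + k * (i2 Ss)) = α₂ := by
        rw [hg_app] at hg0
        linarith
      have hkey := key_ineq hμ hr hk hα₂pos hSspos hSsltSt hI2pos (hi2le Ss)
        (hf₂nn St It hSt.le hIt.le) ha₂' hf₂t
      have hF₂Ss : F₂ Ss (i2 Ss) = i2 Ss * f₂ Ss (i2 Ss) := hH1₂ _ _
      have hF₂St : F₂ St It = It * f₂ St It := hH1₂ _ _
      rw [hlam] at hFle hteq1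
      rw [hF₂Ss] at hFle
      rw [hF₂St] at hteq1
      linarith
  -- Step B : i2 Ss > 0
  have hmaxJ : max (Jf Ss) 0 = Jf Ss := max_eq_left hJpos.le
  have hf₁eq' : f₁ Ss (Jf Ss) = α₁ := by rw [hmaxJ] at hf₁eq; exact hf₁eq
  have hI2pos : 0 < i2 Ss := by
    rcases eq_or_lt_of_le (hi2nonneg Ss) with h0 | hpos
    swap
    · exact hpos
    exfalso
    have hgSs0 : g Ss 0 ≤ 0 := by
      have := hgle Ss hSs0 hSsltSt.le
      rw [← h0] at this
      exact this
    have hF₂0 : F₂ Ss 0 = 0 := (hF₂zero Ss 0 hSs0 le_rfl).2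
    have hJval : α₁ * Jf Ss = Λ - lam * Ss := by
      rw [hJ_app, ← h0, hF₂0]
      field_simp
      ring
    rcases lt_trichotomy Ss Sb with hlt | heq | hgt
    · have hJgt : Ib < Jf Ss := by
        have hm : α₁ * Ib < α₁ * Jf Ss := by
          have := mul_pos hlampos (sub_pos.mpr hlt)
          linarith [hIbval, hJval]
        exact lt_of_mul_lt_mul_left hm hα₁pos.le
      have h1 : f₁ Ss (Jf Ss) ≤ f₁ Ss Ib :=
        anti1 Ss hSs0 (mem_Ici.mpr hIb.le) (mem_Ici.mpr hJpos.le) hJgt.le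
      have h2 : f₁ Ss Ib < f₁ Sb Ib :=
        mono1 Ib hIb.le (mem_Ici.mpr hSs0) (mem_Ici.mpr hSb.le) hlt
      rw [hf₁eq'] at h1
      rw [hf₁b] at h2
      linarith
    · rw [heq] at hgSs0
      linarith
    · have hJlt : Jf Ss < Ib := by
        have hm : α₁ * Jf Ss < α₁ * Ib := by
          have := mul_pos hlampos (sub_pos.mpr hgt)
          linarith [hIbval, hJval]
        exact lt_of_mul_lt_mul_left hm hα₁pos.le
      have h1 : f₁ Ss Ib ≤ f₁ Ss (Jf Ss) :=
        anti1 Ss hSs0 (mem_Ici.mpr hJpos.le) (mem_Ici.mpr hIb.le) hJlt.le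
      have h2 : f₁ Sb Ib < f₁ Ss Ib :=
        mono1 Ib hIb.le (mem_Ici.mpr hSb.le) (mem_Ici.mpr hSs0) hgt
      rw [hf₁eq'] at h1
      rw [hf₁b] at h2
      linarith
  -- conclusion
  have hdSs : 0 < μ + k * i2 Ss := hden _ (hi2nonneg Ss)
  have hgSs : g Ss (i2 Ss) = 0 := hgroot Ss hSs0 hSsltSt.le hI2pos
  have hg' : f₂ Ss (i2 Ss) + k * r * Ss / (μ + k * i2 Ss) - α₂ = 0 := by
    rw [← hg_app]; exact hgSs
  have hJv2 : α₁ * Jf Ss = Λ - F₂ Ss (i2 Ss) - lam * Ss := by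
    rw [hJ_app]
    field_simp
  refine ⟨Ss, r * Ss / (μ + k * i2 Ss), Jf Ss, i2 Ss, hSspos, by positivity, hJpos, hI2pos,
    ?_, ?_, ?_, ?_⟩
  · rw [hH1₁ Ss (Jf Ss), hf₁eq']
    linarith
  · field_simp; ring
  · rw [hH1₁ Ss (Jf Ss), hf₁eq']
    ring
  · rw [hH1₂ Ss (i2 Ss)]
    field_simp
    field_simp at hg'
    linear_combination (i2 Ss) * hg'
end
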